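/- arXiv:2603.27128 — 9 statements merged into one kernel-verified Lean document; each statement's English description precedes it below -/
import Mathlib

section
/- Let A, Ã be real symmetric n×n matrices and let ε = max_{i,j} |A_{ij} − Ã_{ij}|. Then there exists a permutation σ of {1,…,n} such that the square root of the sum over i of |λ_i(A) − λ_{σ(i)}(Ã)|² is at most n·ε, where λ_i denotes the eigenvalues. -/
set_option maxHeartbeats 1000000

open Matrix Finset

/-- For a doubly stochastic matrix `S` and any cost matrix `c`, some permutation does at
most as well as the weighted average. -/
lemma exists_perm_sum_le {n : ℕ} (S : Matrix (Fin n) (Fin n) ℝ)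
    (hS : S ∈ doublyStochastic ℝ (Fin n)) (c : Matrix (Fin n) (Fin n) ℝ) :
    ∃ σ : Equiv.Perm (Fin n), ∑ i, c i (σ i) ≤ ∑ i, ∑ j, S i j * c i j := by
  obtain ⟨w, hw0, hw1, hwS⟩ := exists_eq_sum_perm_of_mem_doublyStochastic hS
  obtain ⟨σ₀, -, hσ₀⟩ := Finset.exists_min_image Finset.univ
    (fun σ : Equiv.Perm (Fin n) => ∑ i, c i (σ i)) ⟨1, Finset.mem_univ 1⟩
  refine ⟨σ₀, ?_⟩
  have hSij : ∀ i j, S i j = ∑ σ : Equiv.Perm (Fin n), w σ * (if σ i = j then 1 else 0) := by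
    intro i j
    rw [← hwS]
    simp only [Matrix.sum_apply]
    refine Finset.sum_congr rfl fun σ _ => ?_
    simp only [Matrix.smul_apply, Equiv.Perm.permMatrix, PEquiv.toMatrix_apply,
      Equiv.toPEquiv_apply, Option.mem_def, Option.some.injEq, smul_eq_mul]
  have h1 : ∀ i, ∑ j, S i j * c i j = ∑ σ : Equiv.Perm (Fin n), w σ * c i (σ i) := by
    intro i
    simp_rw [hSij, Finset.sum_mul]
    rw [Finset.sum_comm]
    refine Finset.sum_congr rfl fun σ _ => ?_
    simp [mul_ite, ite_mul]
  have key : ∑ i, ∑ j, S i j * c i j = ∑ σ : Equiv.Perm (Fin n), w σ * ∑ i, c i (σ i) := by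
    simp_rw [h1]
    rw [Finset.sum_comm]
    exact Finset.sum_congr rfl fun σ _ => (Finset.mul_sum _ _ _).symm
  rw [key]
  calc ∑ i, c i (σ₀ i) = ∑ σ : Equiv.Perm (Fin n), w σ * ∑ i, c i (σ₀ i) := by
        rw [← Finset.sum_mul, hw1, one_mul]
    _ ≤ ∑ σ : Equiv.Perm (Fin n), w σ * ∑ i, c i (σ i) :=
        Finset.sum_le_sum fun σ _ => mul_le_mul_of_nonneg_left (hσ₀ σ (Finset.mem_univ σ)) (hw0 σ)

lemma trace_transpose_mul_self {n : ℕ} (M : Matrix (Fin n) (Fin n) ℝ) :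
    trace (Mᵀ * M) = ∑ i, ∑ j, (M i j) ^ 2 := by
  rw [Finset.sum_comm]
  simp [Matrix.trace, Matrix.diag, Matrix.mul_apply, sq]

/-- Hoffman–Wielandt style bound: if `A, Ã` are real symmetric `n × n` matrices and every
entry of `A - Ã` has absolute value at most `ε`, then some matching `σ` of the eigenvalues
satisfies `√(Σ_i |λ_i(A) - λ_{σ i}(Ã)|²) ≤ n ε`. -/
theorem hoffman_wielandt_truncation
    (n : ℕ) (A B : Matrix (Fin n) (Fin n) ℝ)
    (hA : A.IsHermitian) (hB : B.IsHermitian)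
    (ε : ℝ) (hε : ∀ i j, |A i j - B i j| ≤ ε) :
    ∃ σ : Equiv.Perm (Fin n),
      Real.sqrt (∑ i, |hA.eigenvalues i - hB.eigenvalues (σ i)| ^ 2) ≤ n * ε := by
  classical
  rcases Nat.eq_zero_or_pos n with rfl | hn
  · exact ⟨1, by simp⟩
  have hε0 : 0 ≤ ε := (abs_nonneg _).trans (hε ⟨0, hn⟩ ⟨0, hn⟩)
  set U : Matrix (Fin n) (Fin n) ℝ := (hA.eigenvectorUnitary : Matrix (Fin n) (Fin n) ℝ) with hU
  set V : Matrix (Fin n) (Fin n) ℝ := (hB.eigenvectorUnitary : Matrix (Fin n) (Fin n) ℝ) with hV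
  have hU1 : Uᵀ * U = 1 := by
    rw [← Matrix.conjTranspose_eq_transpose_of_trivial, ← Matrix.star_eq_conjTranspose]
    exact (Matrix.mem_unitaryGroup_iff'.mp (hA.eigenvectorUnitary).2)
  have hU2 : U * Uᵀ = 1 := by
    rw [← Matrix.conjTranspose_eq_transpose_of_trivial, ← Matrix.star_eq_conjTranspose]
    exact (Matrix.mem_unitaryGroup_iff.mp (hA.eigenvectorUnitary).2)
  have hV1 : Vᵀ * V = 1 := by
    rw [← Matrix.conjTranspose_eq_transpose_of_trivial, ← Matrix.star_eq_conjTranspose]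
    exact (Matrix.mem_unitaryGroup_iff'.mp (hB.eigenvectorUnitary).2)
  have hV2 : V * Vᵀ = 1 := by
    rw [← Matrix.conjTranspose_eq_transpose_of_trivial, ← Matrix.star_eq_conjTranspose]
    exact (Matrix.mem_unitaryGroup_iff.mp (hB.eigenvectorUnitary).2)
  set lam := hA.eigenvalues with hlam
  set mu := hB.eigenvalues with hmu
  have hAe : A = U * Matrix.diagonal lam * Uᵀ := by
    have := hA.spectral_theorem
    simpa [Matrix.star_eq_conjTranspose, Matrix.conjTranspose_eq_transpose_of_trivial,
      Function.comp] using this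
  have hBe : B = V * Matrix.diagonal mu * Vᵀ := by
    have := hB.spectral_theorem
    simpa [Matrix.star_eq_conjTranspose, Matrix.conjTranspose_eq_transpose_of_trivial,
      Function.comp] using this
  set W : Matrix (Fin n) (Fin n) ℝ := Uᵀ * V with hW
  set E : Matrix (Fin n) (Fin n) ℝ := A - B with hE
  set C : Matrix (Fin n) (Fin n) ℝ := Uᵀ * E * V with hC
  -- C = Dλ W - W Dμ
  have hCeq : C = Matrix.diagonal lam * W - W * Matrix.diagonal mu := by
    rw [hC, hE, Matrix.mul_sub, Matrix.sub_mul, hAe, hBe]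
    congr 1
    · calc Uᵀ * (U * Matrix.diagonal lam * Uᵀ) * V
          = (Uᵀ * U) * Matrix.diagonal lam * (Uᵀ * V) := by
            simp only [Matrix.mul_assoc]
        _ = Matrix.diagonal lam * W := by rw [hU1, Matrix.one_mul, hW]
    · calc Uᵀ * (V * Matrix.diagonal mu * Vᵀ) * V
          = (Uᵀ * V) * Matrix.diagonal mu * (Vᵀ * V) := by
            simp only [Matrix.mul_assoc]
        _ = W * Matrix.diagonal mu := by rw [hV1, Matrix.mul_one, hW]
  have hCentry : ∀ i j, C i j = (lam i - mu j) * W i j := by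
    intro i j
    rw [hCeq]
    simp [Matrix.sub_apply, Matrix.diagonal_mul, Matrix.mul_diagonal, sub_mul, mul_comm]
  -- Frobenius invariance
  have hfrob : ∑ i, ∑ j, (C i j) ^ 2 = ∑ i, ∑ j, (E i j) ^ 2 := by
    rw [← trace_transpose_mul_self, ← trace_transpose_mul_self]
    have : Cᵀ * C = Vᵀ * (Eᵀ * E) * V := by
      rw [hC]
      simp only [Matrix.transpose_mul, Matrix.transpose_transpose, Matrix.mul_assoc]
      rw [← Matrix.mul_assoc U Uᵀ, hU2, Matrix.one_mul]
    rw [this, Matrix.trace_mul_cycle, ← Matrix.mul_assoc, hV2, Matrix.one_mul]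
  -- doubly stochastic matrix of squared entries of W
  set S : Matrix (Fin n) (Fin n) ℝ := fun i j => (W i j) ^ 2 with hS
  have hWW : W * Wᵀ = 1 := by
    rw [hW, Matrix.transpose_mul, Matrix.transpose_transpose]
    calc Uᵀ * V * (Vᵀ * U) = Uᵀ * (V * Vᵀ) * U := by simp only [Matrix.mul_assoc]
      _ = 1 := by rw [hV2, Matrix.mul_one, hU1]
  have hWW' : Wᵀ * W = 1 := by
    rw [hW, Matrix.transpose_mul, Matrix.transpose_transpose]
    calc Vᵀ * U * (Uᵀ * V) = Vᵀ * (U * Uᵀ) * V := by simp only [Matrix.mul_assoc]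
      _ = 1 := by rw [hU2, Matrix.mul_one, hV1]
  have hSds : S ∈ doublyStochastic ℝ (Fin n) := by
    rw [mem_doublyStochastic_iff_sum]
    refine ⟨fun i j => sq_nonneg _, fun i => ?_, fun j => ?_⟩
    · have := congrFun (congrFun hWW i) i
      simpa [hS, Matrix.mul_apply, sq] using this
    · have := congrFun (congrFun hWW' j) j
      simpa [hS, Matrix.mul_apply, sq] using this
  -- the cost matrix
  set c : Matrix (Fin n) (Fin n) ℝ := fun i j => (lam i - mu j) ^ 2 with hc
  obtain ⟨σ, hσ⟩ := exists_perm_sum_le S hSds c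
  refine ⟨σ, ?_⟩
  have hsum : ∑ i, ∑ j, S i j * c i j = ∑ i, ∑ j, (C i j) ^ 2 := by
    refine Finset.sum_congr rfl fun i _ => Finset.sum_congr rfl fun j _ => ?_
    rw [hCentry i j]
    simp only [hS, hc]
    ring
  have hEbound : ∑ i, ∑ j, (E i j) ^ 2 ≤ (n * ε) ^ 2 := by
    have : ∀ i j : Fin n, (E i j) ^ 2 ≤ ε ^ 2 := by
      intro i j
      have h1 : |E i j| ≤ ε := hε i j
      calc (E i j) ^ 2 = |E i j| ^ 2 := (sq_abs _).symm
        _ ≤ ε ^ 2 := pow_le_pow_left₀ (abs_nonneg _) h1 2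
    calc ∑ i, ∑ j, (E i j) ^ 2 ≤ ∑ _i : Fin n, ∑ _j : Fin n, ε ^ 2 :=
          Finset.sum_le_sum fun i _ => Finset.sum_le_sum fun j _ => this i j
      _ = (n * ε) ^ 2 := by
          simp [Finset.sum_const]
          ring
  have hfinal : ∑ i, c i (σ i) ≤ (n * ε) ^ 2 := by
    calc ∑ i, c i (σ i) ≤ ∑ i, ∑ j, S i j * c i j := hσ
      _ = ∑ i, ∑ j, (C i j) ^ 2 := hsum
      _ = ∑ i, ∑ j, (E i j) ^ 2 := hfrob
      _ ≤ (n * ε) ^ 2 := hEbound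
  have habs : ∑ i, |lam i - mu (σ i)| ^ 2 = ∑ i, c i (σ i) := by
    refine Finset.sum_congr rfl fun i _ => ?_
    rw [sq_abs]
  rw [habs]
  calc Real.sqrt (∑ i, c i (σ i)) ≤ Real.sqrt ((n * ε) ^ 2) := Real.sqrt_le_sqrt hfinal
    _ = n * ε := Real.sqrt_sq (by positivity)
end

section
/- Let A, B ∈ ℂ^{n×n×n}. Suppose for each mode d ∈ {1,2,3} the Gram matrices G_d(A) and G_d(B) have simple spectra, equal as multisets, with unitary diagonalizations G_d(A) = U_d Λ_d U_d* and G_d(B) = V_d Λ_d V_d* (eigenvalues in nonincreasing order). Define the core tensors S_A = (U₁*,U₂*,U₃*)↷A and S_B = (V₁*,V₂*,V₃*)↷B. Then there exist unitary L, R, T with (L,R,T)↷A = B if and only if there exist diagonal unitary matrices D₁, D₂, D₃ with entries in the unit circle such that (D₁,D₂,D₃)↷S_A = S_B. -/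
open Matrix

/-- The multilinear change-of-basis action of a triple of `n × n` matrices on a 3-tensor. -/
noncomputable def tensorAct {n : ℕ} (L R T : Matrix (Fin n) (Fin n) ℂ)
    (A : Fin n → Fin n → Fin n → ℂ) : Fin n → Fin n → Fin n → ℂ :=
  fun i j k => ∑ p, ∑ q, ∑ r, L i p * R j q * T k r * A p q r

/-- Mode-1 flattening. -/
def flatten1 {n : ℕ} (X : Fin n → Fin n → Fin n → ℂ) :
    Matrix (Fin n) (Fin n × Fin n) ℂ := Matrix.of fun i jk => X i jk.1 jk.2

/-- Mode-2 flattening. -/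
def flatten2 {n : ℕ} (X : Fin n → Fin n → Fin n → ℂ) :
    Matrix (Fin n) (Fin n × Fin n) ℂ := Matrix.of fun j ik => X ik.1 j ik.2

/-- Mode-3 flattening. -/
def flatten3 {n : ℕ} (X : Fin n → Fin n → Fin n → ℂ) :
    Matrix (Fin n) (Fin n × Fin n) ℂ := Matrix.of fun k ij => X ij.1 ij.2 k

/-- Mode-d Gram matrices `G_d(X) = X₍d₎ X₍d₎ᴴ`. -/
noncomputable def gram1 {n : ℕ} (X : Fin n → Fin n → Fin n → ℂ) :
    Matrix (Fin n) (Fin n) ℂ := flatten1 X * (flatten1 X)ᴴ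
noncomputable def gram2 {n : ℕ} (X : Fin n → Fin n → Fin n → ℂ) :
    Matrix (Fin n) (Fin n) ℂ := flatten2 X * (flatten2 X)ᴴ
noncomputable def gram3 {n : ℕ} (X : Fin n → Fin n → Fin n → ℂ) :
    Matrix (Fin n) (Fin n) ℂ := flatten3 X * (flatten3 X)ᴴ

open Kronecker

section HOSVDAux
variable {n : ℕ}

lemma flatten1_act (L R T : Matrix (Fin n) (Fin n) ℂ) (A : Fin n → Fin n → Fin n → ℂ) :
    flatten1 (tensorAct L R T A) = L * flatten1 A * (R ⊗ₖ T)ᵀ := by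
  ext i ⟨j, k⟩
  simp only [flatten1, tensorAct, Matrix.mul_apply, Matrix.of_apply, transpose_apply,
    kroneckerMap_apply, Fintype.sum_prod_type, Finset.sum_mul, Finset.mul_sum]
  rw [Finset.sum_comm]
  refine Finset.sum_congr rfl fun q _ => ?_
  rw [Finset.sum_comm]
  refine Finset.sum_congr rfl fun r _ => Finset.sum_congr rfl fun p _ => ?_
  ring

lemma flatten2_act (L R T : Matrix (Fin n) (Fin n) ℂ) (A : Fin n → Fin n → Fin n → ℂ) :
    flatten2 (tensorAct L R T A) = R * flatten2 A * (L ⊗ₖ T)ᵀ := by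
  ext j ⟨i, k⟩
  simp only [flatten2, tensorAct, Matrix.mul_apply, Matrix.of_apply, transpose_apply,
    kroneckerMap_apply, Fintype.sum_prod_type, Finset.sum_mul, Finset.mul_sum]
  refine Finset.sum_congr rfl fun p _ => ?_
  rw [Finset.sum_comm]
  refine Finset.sum_congr rfl fun r _ => Finset.sum_congr rfl fun q _ => ?_
  ring

lemma flatten3_act (L R T : Matrix (Fin n) (Fin n) ℂ) (A : Fin n → Fin n → Fin n → ℂ) :
    flatten3 (tensorAct L R T A) = T * flatten3 A * (L ⊗ₖ R)ᵀ := by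
  ext k ⟨i, j⟩
  simp only [flatten3, tensorAct, Matrix.mul_apply, Matrix.of_apply, transpose_apply,
    kroneckerMap_apply, Fintype.sum_prod_type, Finset.sum_mul, Finset.mul_sum]
  refine Finset.sum_congr rfl fun p _ => Finset.sum_congr rfl fun q _ => ?_
  refine Finset.sum_congr rfl fun r _ => ?_
  ring

lemma flatten1_inj {A B : Fin n → Fin n → Fin n → ℂ} (h : flatten1 A = flatten1 B) : A = B := by
  funext i j k
  exact congrFun (congrFun h i) (j, k)

lemma tensorAct_comp (L R T L' R' T' : Matrix (Fin n) (Fin n) ℂ)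
    (A : Fin n → Fin n → Fin n → ℂ) :
    tensorAct (L * L') (R * R') (T * T') A = tensorAct L R T (tensorAct L' R' T' A) := by
  apply flatten1_inj
  rw [flatten1_act, flatten1_act, flatten1_act, Matrix.mul_kronecker_mul,
    Matrix.transpose_mul]
  simp only [Matrix.mul_assoc]

lemma tensorAct_one (A : Fin n → Fin n → Fin n → ℂ) : tensorAct 1 1 1 A = A := by
  apply flatten1_inj
  rw [flatten1_act, Matrix.one_kronecker_one, Matrix.transpose_one, Matrix.mul_one,
    Matrix.one_mul]

lemma kron_conjTranspose (R T : Matrix (Fin n) (Fin n) ℂ) :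
    ((R ⊗ₖ T)ᵀ)ᴴ = (Rᴴ ⊗ₖ Tᴴ)ᵀ := by
  ext ⟨a, b⟩ ⟨c, d⟩
  simp [conjTranspose_apply, transpose_apply]

lemma kron_unitary {R T : Matrix (Fin n) (Fin n) ℂ}
    (hR : R ∈ Matrix.unitaryGroup (Fin n) ℂ) (hT : T ∈ Matrix.unitaryGroup (Fin n) ℂ) :
    (R ⊗ₖ T)ᵀ * ((R ⊗ₖ T)ᵀ)ᴴ = 1 := by
  have hR' : Rᴴ * R = 1 := mem_unitaryGroup_iff'.mp hR
  have hT' : Tᴴ * T = 1 := mem_unitaryGroup_iff'.mp hT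
  rw [kron_conjTranspose, ← Matrix.transpose_mul, ← Matrix.mul_kronecker_mul,
    hR', hT', Matrix.one_kronecker_one, Matrix.transpose_one]

lemma gram1_act {L R T : Matrix (Fin n) (Fin n) ℂ}
    (hR : R ∈ Matrix.unitaryGroup (Fin n) ℂ) (hT : T ∈ Matrix.unitaryGroup (Fin n) ℂ)
    (A : Fin n → Fin n → Fin n → ℂ) :
    gram1 (tensorAct L R T A) = L * gram1 A * Lᴴ := by
  rw [gram1, flatten1_act, Matrix.conjTranspose_mul, Matrix.conjTranspose_mul]
  calc L * flatten1 A * (R ⊗ₖ T)ᵀ * (((R ⊗ₖ T)ᵀ)ᴴ * ((flatten1 A)ᴴ * Lᴴ))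
      = L * flatten1 A * ((R ⊗ₖ T)ᵀ * ((R ⊗ₖ T)ᵀ)ᴴ) * ((flatten1 A)ᴴ * Lᴴ) := by
        simp only [Matrix.mul_assoc]
    _ = L * gram1 A * Lᴴ := by
        rw [kron_unitary hR hT, Matrix.mul_one, gram1]; simp only [Matrix.mul_assoc]

lemma gram2_act {L R T : Matrix (Fin n) (Fin n) ℂ}
    (hL : L ∈ Matrix.unitaryGroup (Fin n) ℂ) (hT : T ∈ Matrix.unitaryGroup (Fin n) ℂ)
    (A : Fin n → Fin n → Fin n → ℂ) :
    gram2 (tensorAct L R T A) = R * gram2 A * Rᴴ := by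
  rw [gram2, flatten2_act, Matrix.conjTranspose_mul, Matrix.conjTranspose_mul]
  calc R * flatten2 A * (L ⊗ₖ T)ᵀ * (((L ⊗ₖ T)ᵀ)ᴴ * ((flatten2 A)ᴴ * Rᴴ))
      = R * flatten2 A * ((L ⊗ₖ T)ᵀ * ((L ⊗ₖ T)ᵀ)ᴴ) * ((flatten2 A)ᴴ * Rᴴ) := by
        simp only [Matrix.mul_assoc]
    _ = R * gram2 A * Rᴴ := by
        rw [kron_unitary hL hT, Matrix.mul_one, gram2]; simp only [Matrix.mul_assoc]

lemma gram3_act {L R T : Matrix (Fin n) (Fin n) ℂ}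
    (hL : L ∈ Matrix.unitaryGroup (Fin n) ℂ) (hR : R ∈ Matrix.unitaryGroup (Fin n) ℂ)
    (A : Fin n → Fin n → Fin n → ℂ) :
    gram3 (tensorAct L R T A) = T * gram3 A * Tᴴ := by
  rw [gram3, flatten3_act, Matrix.conjTranspose_mul, Matrix.conjTranspose_mul]
  calc T * flatten3 A * (L ⊗ₖ R)ᵀ * (((L ⊗ₖ R)ᵀ)ᴴ * ((flatten3 A)ᴴ * Tᴴ))
      = T * flatten3 A * ((L ⊗ₖ R)ᵀ * ((L ⊗ₖ R)ᵀ)ᴴ) * ((flatten3 A)ᴴ * Tᴴ) := by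
        simp only [Matrix.mul_assoc]
    _ = T * gram3 A * Tᴴ := by
        rw [kron_unitary hL hR, Matrix.mul_one, gram3]; simp only [Matrix.mul_assoc]

/-- A unitary commuting with a real diagonal with distinct entries is a diagonal phase. -/
lemma unitary_commute_diag {Λ : Fin n → ℝ} (hΛ : StrictAnti Λ)
    {P : Matrix (Fin n) (Fin n) ℂ} (hP : P ∈ Matrix.unitaryGroup (Fin n) ℂ)
    (hc : P * Matrix.diagonal (fun i => (Λ i : ℂ)) = Matrix.diagonal (fun i => (Λ i : ℂ)) * P) :
    ∃ D : Fin n → ℂ, (∀ i, ‖D i‖ = 1) ∧ P = Matrix.diagonal D := by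
  have hdiag : ∀ i j, i ≠ j → P i j = 0 := by
    intro i j hij
    have := congrFun (congrFun hc i) j
    rw [Matrix.mul_diagonal, Matrix.diagonal_mul] at this
    have hΛne : (Λ i : ℂ) ≠ (Λ j : ℂ) := by
      simp only [ne_eq, Complex.ofReal_inj]
      exact fun h => hij (hΛ.injective h)
    have : P i j * (Λ j : ℂ) - (Λ i : ℂ) * P i j = 0 := by
      rw [this]; ring
    have h2 : P i j * ((Λ j : ℂ) - (Λ i : ℂ)) = 0 := by linear_combination this
    rcases mul_eq_zero.mp h2 with h | h
    · exact h
    · exact absurd (by linear_combination h) hΛne.symm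
  refine ⟨fun i => P i i, ?_, ?_⟩
  · intro i
    have h1 : P * Pᴴ = 1 := mem_unitaryGroup_iff.mp hP
    have := congrFun (congrFun h1 i) i
    simp only [Matrix.mul_apply, Matrix.conjTranspose_apply, Matrix.one_apply_eq] at this
    have hsum : ∑ j, P i j * star (P i j) = P i i * star (P i i) := by
      rw [Finset.sum_eq_single i]
      · intro b _ hb; rw [hdiag i b (Ne.symm hb)]; simp
      · simp
    rw [hsum] at this
    rw [Complex.star_def, Complex.mul_conj] at this
    have hnsq : Complex.normSq (P i i) = 1 := by exact_mod_cast this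
    rw [← Complex.sq_norm] at hnsq
    nlinarith [norm_nonneg (P i i), sq_nonneg (‖P i i‖ - 1), hnsq]

  · ext i j
    by_cases h : i = j
    · subst h; simp [Matrix.diagonal_apply_eq]
    · rw [Matrix.diagonal_apply_ne _ h]; exact hdiag i j h

lemma diag_unitary {D : Fin n → ℂ} (hD : ∀ i, ‖D i‖ = 1) :
    Matrix.diagonal D ∈ Matrix.unitaryGroup (Fin n) ℂ := by
  rw [mem_unitaryGroup_iff]
  rw [Matrix.star_eq_conjTranspose, Matrix.diagonal_conjTranspose, Matrix.diagonal_mul_diagonal]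
  ext i j
  by_cases h : i = j
  · subst h
    simp only [Matrix.diagonal_apply_eq, Matrix.one_apply_eq, Pi.mul_apply, Pi.star_apply]
    rw [Complex.star_def, Complex.mul_conj, ← Complex.sq_norm, hD i]
    norm_num
  · simp [Matrix.diagonal_apply_ne _ h, Matrix.one_apply_ne h]


variable {n : ℕ}

lemma conj_diag_comm {Λd V W : Matrix (Fin n) (Fin n) ℂ}
    (hV : V ∈ Matrix.unitaryGroup (Fin n) ℂ) (hW : W ∈ Matrix.unitaryGroup (Fin n) ℂ)
    (h : V * Λd * Vᴴ = W * Λd * Wᴴ) :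
    (Vᴴ * W) * Λd = Λd * (Vᴴ * W) := by
  have hW1 : Wᴴ * W = 1 := mem_unitaryGroup_iff'.mp hW
  have hV1 : Vᴴ * V = 1 := mem_unitaryGroup_iff'.mp hV
  calc Vᴴ * W * Λd
      = Vᴴ * (W * Λd * Wᴴ) * W := by
        simp only [Matrix.mul_assoc]; rw [hW1, Matrix.mul_one]
    _ = Vᴴ * (V * Λd * Vᴴ) * W := by rw [h]
    _ = Λd * (Vᴴ * W) := by
        have e : Vᴴ * (V * Λd * Vᴴ) * W = Vᴴ * V * (Λd * (Vᴴ * W)) := by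
          simp only [Matrix.mul_assoc]
        rw [e, hV1, Matrix.one_mul]

lemma star_mem_unitary {U : Matrix (Fin n) (Fin n) ℂ}
    (hU : U ∈ Matrix.unitaryGroup (Fin n) ℂ) : Uᴴ ∈ Matrix.unitaryGroup (Fin n) ℂ := by
  rw [← Matrix.star_eq_conjTranspose]; exact Unitary.star_mem hU

end HOSVDAux

/-- HOSVD reduction to diagonal phases: suppose for each mode `d ∈ {1,2,3}` the Gram
matrices of `A` and `B` share a common simple spectrum `Λ_d` (listed in strictly decreasing
order) with unitary diagonalizations `G_d(A) = U_d Λ_d U_dᴴ` and `G_d(B) = V_d Λ_d V_dᴴ`.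
Let `S_A = (U₁ᴴ,U₂ᴴ,U₃ᴴ) ↷ A` and `S_B = (V₁ᴴ,V₂ᴴ,V₃ᴴ) ↷ B`.  Then `A` and `B` are
unitarily isomorphic iff `S_A` and `S_B` are related by diagonal unitary phase matrices. -/
theorem hosvd_fundamental_condition {n : ℕ}
    (A B : Fin n → Fin n → Fin n → ℂ)
    (Λ₁ Λ₂ Λ₃ : Fin n → ℝ)
    (hΛ₁ : StrictAnti Λ₁) (hΛ₂ : StrictAnti Λ₂) (hΛ₃ : StrictAnti Λ₃)
    (U₁ U₂ U₃ V₁ V₂ V₃ : Matrix (Fin n) (Fin n) ℂ)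
    (hU₁ : U₁ ∈ Matrix.unitaryGroup (Fin n) ℂ)
    (hU₂ : U₂ ∈ Matrix.unitaryGroup (Fin n) ℂ)
    (hU₃ : U₃ ∈ Matrix.unitaryGroup (Fin n) ℂ)
    (hV₁ : V₁ ∈ Matrix.unitaryGroup (Fin n) ℂ)
    (hV₂ : V₂ ∈ Matrix.unitaryGroup (Fin n) ℂ)
    (hV₃ : V₃ ∈ Matrix.unitaryGroup (Fin n) ℂ)
    (hGA₁ : gram1 A = U₁ * Matrix.diagonal (fun i => (Λ₁ i : ℂ)) * U₁ᴴ)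
    (hGA₂ : gram2 A = U₂ * Matrix.diagonal (fun i => (Λ₂ i : ℂ)) * U₂ᴴ)
    (hGA₃ : gram3 A = U₃ * Matrix.diagonal (fun i => (Λ₃ i : ℂ)) * U₃ᴴ)
    (hGB₁ : gram1 B = V₁ * Matrix.diagonal (fun i => (Λ₁ i : ℂ)) * V₁ᴴ)
    (hGB₂ : gram2 B = V₂ * Matrix.diagonal (fun i => (Λ₂ i : ℂ)) * V₂ᴴ)
    (hGB₃ : gram3 B = V₃ * Matrix.diagonal (fun i => (Λ₃ i : ℂ)) * V₃ᴴ) :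
    (∃ L R T : Matrix (Fin n) (Fin n) ℂ,
        L ∈ Matrix.unitaryGroup (Fin n) ℂ ∧ R ∈ Matrix.unitaryGroup (Fin n) ℂ ∧
        T ∈ Matrix.unitaryGroup (Fin n) ℂ ∧ tensorAct L R T A = B) ↔
    (∃ D₁ D₂ D₃ : Fin n → ℂ,
        (∀ i, ‖D₁ i‖ = 1) ∧ (∀ i, ‖D₂ i‖ = 1) ∧
        (∀ i, ‖D₃ i‖ = 1) ∧
        tensorAct (Matrix.diagonal D₁) (Matrix.diagonal D₂) (Matrix.diagonal D₃)
            (tensorAct U₁ᴴ U₂ᴴ U₃ᴴ A)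
          = tensorAct V₁ᴴ V₂ᴴ V₃ᴴ B) := by
  constructor
  · rintro ⟨L, R, T, hL, hR, hT, hact⟩
    -- conjugation relations on Gram matrices
    have key₁ : V₁ * Matrix.diagonal (fun i => (Λ₁ i : ℂ)) * V₁ᴴ
        = (L * U₁) * Matrix.diagonal (fun i => (Λ₁ i : ℂ)) * (L * U₁)ᴴ := by
      rw [← hGB₁, ← hact, gram1_act hR hT, hGA₁, Matrix.conjTranspose_mul]
      simp only [Matrix.mul_assoc]
    have key₂ : V₂ * Matrix.diagonal (fun i => (Λ₂ i : ℂ)) * V₂ᴴ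
        = (R * U₂) * Matrix.diagonal (fun i => (Λ₂ i : ℂ)) * (R * U₂)ᴴ := by
      rw [← hGB₂, ← hact, gram2_act hL hT, hGA₂, Matrix.conjTranspose_mul]
      simp only [Matrix.mul_assoc]
    have key₃ : V₃ * Matrix.diagonal (fun i => (Λ₃ i : ℂ)) * V₃ᴴ
        = (T * U₃) * Matrix.diagonal (fun i => (Λ₃ i : ℂ)) * (T * U₃)ᴴ := by
      rw [← hGB₃, ← hact, gram3_act hL hR, hGA₃, Matrix.conjTranspose_mul]
      simp only [Matrix.mul_assoc]
    have hP₁ : V₁ᴴ * (L * U₁) ∈ Matrix.unitaryGroup (Fin n) ℂ :=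
      mul_mem (star_mem_unitary hV₁) (mul_mem hL hU₁)
    have hP₂ : V₂ᴴ * (R * U₂) ∈ Matrix.unitaryGroup (Fin n) ℂ :=
      mul_mem (star_mem_unitary hV₂) (mul_mem hR hU₂)
    have hP₃ : V₃ᴴ * (T * U₃) ∈ Matrix.unitaryGroup (Fin n) ℂ :=
      mul_mem (star_mem_unitary hV₃) (mul_mem hT hU₃)
    obtain ⟨D₁, hD₁, hPD₁⟩ := unitary_commute_diag hΛ₁ hP₁
      (conj_diag_comm hV₁ (mul_mem hL hU₁) key₁)
    obtain ⟨D₂, hD₂, hPD₂⟩ := unitary_commute_diag hΛ₂ hP₂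
      (conj_diag_comm hV₂ (mul_mem hR hU₂) key₂)
    obtain ⟨D₃, hD₃, hPD₃⟩ := unitary_commute_diag hΛ₃ hP₃
      (conj_diag_comm hV₃ (mul_mem hT hU₃) key₃)
    refine ⟨D₁, D₂, D₃, hD₁, hD₂, hD₃, ?_⟩
    have hU₁' : U₁ * U₁ᴴ = 1 := by
      have := mem_unitaryGroup_iff.mp hU₁; rwa [Matrix.star_eq_conjTranspose] at this
    have hU₂' : U₂ * U₂ᴴ = 1 := by
      have := mem_unitaryGroup_iff.mp hU₂; rwa [Matrix.star_eq_conjTranspose] at this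
    have hU₃' : U₃ * U₃ᴴ = 1 := by
      have := mem_unitaryGroup_iff.mp hU₃; rwa [Matrix.star_eq_conjTranspose] at this
    have hred : ∀ V W U : Matrix (Fin n) (Fin n) ℂ, U * Uᴴ = 1 →
        (Vᴴ * (W * U)) * Uᴴ = Vᴴ * W := by
      intro V W U hU
      simp only [Matrix.mul_assoc]; rw [hU, Matrix.mul_one]
    rw [← hPD₁, ← hPD₂, ← hPD₃, ← tensorAct_comp,
      hred V₁ L U₁ hU₁', hred V₂ R U₂ hU₂', hred V₃ T U₃ hU₃',
      tensorAct_comp, hact]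
  · rintro ⟨D₁, D₂, D₃, hD₁, hD₂, hD₃, heq⟩
    have hV₁' : V₁ * V₁ᴴ = 1 := by
      have := mem_unitaryGroup_iff.mp hV₁; rwa [Matrix.star_eq_conjTranspose] at this
    have hV₂' : V₂ * V₂ᴴ = 1 := by
      have := mem_unitaryGroup_iff.mp hV₂; rwa [Matrix.star_eq_conjTranspose] at this
    have hV₃' : V₃ * V₃ᴴ = 1 := by
      have := mem_unitaryGroup_iff.mp hV₃; rwa [Matrix.star_eq_conjTranspose] at this
    refine ⟨V₁ * Matrix.diagonal D₁ * U₁ᴴ, V₂ * Matrix.diagonal D₂ * U₂ᴴ,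
      V₃ * Matrix.diagonal D₃ * U₃ᴴ,
      mul_mem (mul_mem hV₁ (diag_unitary hD₁)) (star_mem_unitary hU₁),
      mul_mem (mul_mem hV₂ (diag_unitary hD₂)) (star_mem_unitary hU₂),
      mul_mem (mul_mem hV₃ (diag_unitary hD₃)) (star_mem_unitary hU₃), ?_⟩
    calc tensorAct (V₁ * Matrix.diagonal D₁ * U₁ᴴ) (V₂ * Matrix.diagonal D₂ * U₂ᴴ)
          (V₃ * Matrix.diagonal D₃ * U₃ᴴ) A
        = tensorAct V₁ V₂ V₃ (tensorAct (Matrix.diagonal D₁) (Matrix.diagonal D₂)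
            (Matrix.diagonal D₃) (tensorAct U₁ᴴ U₂ᴴ U₃ᴴ A)) := by
          simp only [Matrix.mul_assoc]
          rw [tensorAct_comp, tensorAct_comp]
      _ = tensorAct V₁ V₂ V₃ (tensorAct V₁ᴴ V₂ᴴ V₃ᴴ B) := by rw [heq]
      _ = B := by rw [← tensorAct_comp, hV₁', hV₂', hV₃', tensorAct_one]
end

section
/- Let v₁,…,vₙ be orthonormal vectors in ℂⁿ and let D = diag(d₁,…,dₙ) with d₁ > d₂ > ⋯ > dₙ > 0 and d_i − d_{i+1} > δ > 0 for all i. If for some indices i ≠ j the coordinates of vₙ satisfy |v_{n,i}| > ε and |v_{n,j}| > ε, then there exists k ∈ {1,…,n−1} such that |⟨vₙ, D vₖ⟩| > εδ/√(2(n−1)). -/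
open Complex Finset Matrix


private lemma col_orthonormal {n : ℕ} (v : Fin n → Fin n → ℂ)
    (hnorm : ∀ a, ∑ t, ‖v a t‖ ^ 2 = 1)
    (horth : ∀ a b, a ≠ b → ∑ t, (starRingEnd ℂ) (v a t) * v b t = 0) :
    ∀ s t, ∑ a, (starRingEnd ℂ) (v a s) * v a t = if s = t then 1 else 0 := by
  have hMM : (Matrix.of v) * (Matrix.of v)ᴴ = 1 := by
    ext a b
    simp only [Matrix.mul_apply, Matrix.conjTranspose_apply, Matrix.of_apply, Matrix.one_apply]
    by_cases hab : a = b
    · subst hab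
      simp only [if_pos rfl]
      have h1 : ∀ t, v a t * star (v a t) = ((‖v a t‖ ^ 2 : ℝ) : ℂ) := by
        intro t
        rw [Complex.sq_norm]
        exact Complex.mul_conj _
      calc ∑ t, v a t * star (v a t) = ∑ t, ((‖v a t‖ ^ 2 : ℝ) : ℂ) :=
            Finset.sum_congr rfl fun t _ => h1 t
        _ = ((∑ t, ‖v a t‖ ^ 2 : ℝ) : ℂ) := by push_cast; ring
        _ = 1 := by rw [hnorm a]; norm_num
    · rw [if_neg hab]
      have := horth a b hab
      have h2 : (starRingEnd ℂ) (∑ t, (starRingEnd ℂ) (v a t) * v b t) = 0 := by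
        rw [this]; simp
      rw [map_sum] at h2
      simpa [mul_comm] using h2
  have hc : (Matrix.of v)ᴴ * (Matrix.of v) = 1 := mul_eq_one_comm.mp hMM
  intro s t
  have := congrFun (congrFun hc s) t
  simpa [Matrix.mul_apply, Matrix.conjTranspose_apply, Matrix.one_apply] using this

private lemma parseval_aux {n : ℕ} (v : Fin n → Fin n → ℂ)
    (hcol : ∀ s t, ∑ a, (starRingEnd ℂ) (v a s) * v a t = if s = t then 1 else 0)
    (w : Fin n → ℂ) :
    ∑ a, Complex.normSq (∑ t, (starRingEnd ℂ) (v a t) * w t) = ∑ t, Complex.normSq (w t) := by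
  have key : (∑ a, ((∑ t, (starRingEnd ℂ) (v a t) * w t) *
      (starRingEnd ℂ) (∑ t, (starRingEnd ℂ) (v a t) * w t)) : ℂ)
      = ∑ t, w t * (starRingEnd ℂ) (w t) := by
    have step : ∀ a : Fin n, (∑ t, (starRingEnd ℂ) (v a t) * w t) *
        (starRingEnd ℂ) (∑ s, (starRingEnd ℂ) (v a s) * w s)
        = ∑ t, ∑ s, (w t * (starRingEnd ℂ) (w s)) * ((starRingEnd ℂ) (v a t) * v a s) := by
      intro a
      rw [map_sum, Finset.sum_mul_sum]
      refine Finset.sum_congr rfl fun t _ => Finset.sum_congr rfl fun s _ => ?_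
      simp only [_root_.map_mul, Complex.conj_conj]
      ring
    calc (∑ a, ((∑ t, (starRingEnd ℂ) (v a t) * w t) *
          (starRingEnd ℂ) (∑ t, (starRingEnd ℂ) (v a t) * w t)) : ℂ)
        = ∑ a, ∑ t, ∑ s, (w t * (starRingEnd ℂ) (w s)) * ((starRingEnd ℂ) (v a t) * v a s) :=
          Finset.sum_congr rfl fun a _ => step a
      _ = ∑ t, ∑ a, ∑ s, (w t * (starRingEnd ℂ) (w s)) * ((starRingEnd ℂ) (v a t) * v a s) :=
          Finset.sum_comm
      _ = ∑ t, ∑ s, ∑ a, (w t * (starRingEnd ℂ) (w s)) * ((starRingEnd ℂ) (v a t) * v a s) :=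
          Finset.sum_congr rfl fun t _ => Finset.sum_comm
      _ = ∑ t, ∑ s, (w t * (starRingEnd ℂ) (w s)) * (∑ a, (starRingEnd ℂ) (v a t) * v a s) := by
          refine Finset.sum_congr rfl fun t _ => Finset.sum_congr rfl fun s _ => ?_
          rw [Finset.mul_sum]
      _ = ∑ t, ∑ s, (w t * (starRingEnd ℂ) (w s)) * (if t = s then 1 else 0) := by
          refine Finset.sum_congr rfl fun t _ => Finset.sum_congr rfl fun s _ => ?_
          rw [hcol t s]
      _ = ∑ t, w t * (starRingEnd ℂ) (w t) := by
          refine Finset.sum_congr rfl fun t _ => ?_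
          simp [mul_ite]
  simp only [Complex.mul_conj] at key
  exact_mod_cast key

/-- Let `v 0, …, v m` be orthonormal vectors in `ℂ^{m+1}` and `D = diag d` with strictly
decreasing positive entries and consecutive gaps `> δ`.  If the last vector has two
coordinates of modulus `> ε`, then `|⟨v_last, D v_k⟩| > ε δ / √(2 m)` for some `k ≠ last`. -/
theorem orthonormal_offdiagonal_lower_bound (m : ℕ)
    (v : Fin (m + 1) → Fin (m + 1) → ℂ)
    (hnorm : ∀ a, ∑ t, ‖v a t‖ ^ 2 = 1)
    (horth : ∀ a b, a ≠ b → ∑ t, (starRingEnd ℂ) (v a t) * v b t = 0)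
    (d : Fin (m + 1) → ℝ)
    (hpos : ∀ i, 0 < d i) (hmono : StrictAnti d)
    (δ : ℝ) (hδ : 0 < δ)
    (hgap : ∀ i : Fin m, d i.castSucc - d i.succ > δ)
    (ε : ℝ) (hε : 0 < ε)
    (i j : Fin (m + 1)) (hij : i ≠ j)
    (hvi : ‖v (Fin.last m) i‖ > ε)
    (hvj : ‖v (Fin.last m) j‖ > ε) :
    ∃ k : Fin (m + 1), k ≠ Fin.last m ∧
      ‖∑ t, (starRingEnd ℂ) (v (Fin.last m) t) * ((d t : ℂ) * v k t)‖ >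
        ε * δ / Real.sqrt (2 * m) := by
  classical
  have hcol := col_orthonormal v hnorm horth
  set u : Fin (m + 1) → ℂ := v (Fin.last m) with hu
  have hm : 0 < m := by
    rcases Nat.eq_zero_or_pos m with hm0 | hm
    · exfalso; subst hm0
      have h1 := i.isLt; have h2 := j.isLt
      exact hij (Fin.ext (by omega))
    · exact hm
  -- gap between any two distinct eigenvalues
  have hgap' : ∀ a b : Fin (m + 1), a < b → d a - d b > δ := by
    intro a b hab
    have ha : (a : ℕ) < m := lt_of_lt_of_le hab (Nat.lt_succ_iff.mp b.isLt)
    set a' : Fin m := ⟨a, ha⟩ with ha'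
    have h1 : a'.castSucc = a := by ext; simp [ha']
    have h2 : (a'.succ : Fin (m + 1)) ≤ b := by
      rw [Fin.le_def]
      simp only [Fin.val_succ, ha']
      exact hab
    have h3 : d b ≤ d a'.succ := hmono.antitone h2
    have h4 := hgap a'
    rw [h1] at h4
    linarith
  have hdij : δ ^ 2 < (d i - d j) ^ 2 := by
    rcases lt_or_gt_of_ne hij with h | h
    · have := hgap' i j h; nlinarith
    · have := hgap' j i h; nlinarith
  -- probabilities, mean, centered vector
  set p : Fin (m + 1) → ℝ := fun t => ‖u t‖ ^ 2 with hp
  have hp0 : ∀ t, 0 ≤ p t := fun t => sq_nonneg _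
  have hp1 : ∑ t, p t = 1 := hnorm _
  set μ : ℝ := ∑ t, d t * p t with hμ
  set w : Fin (m + 1) → ℂ := fun t => ((d t - μ : ℝ) : ℂ) * u t with hw
  set c : Fin (m + 1) → ℂ := fun a => ∑ t, (starRingEnd ℂ) (v a t) * w t with hc
  have hpar : ∑ a, Complex.normSq (c a) = ∑ t, Complex.normSq (w t) :=
    parseval_aux v hcol w
  have hwns : ∀ t, Complex.normSq (w t) = (d t - μ) ^ 2 * p t := by
    intro t
    rw [hw]
    simp only []
    rw [Complex.normSq_mul, Complex.normSq_ofReal, hp]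
    simp only []
    rw [← Complex.sq_norm]
    ring
  have hconj_self : ∀ t, (starRingEnd ℂ) (u t) * u t = ((p t : ℝ) : ℂ) := by
    intro t
    rw [mul_comm, Complex.mul_conj, hp]
    simp [Complex.sq_norm]
  have hclast : c (Fin.last m) = 0 := by
    have hterm : ∀ t, (starRingEnd ℂ) (u t) * w t = (((d t - μ) * p t : ℝ) : ℂ) := by
      intro t
      rw [hw]
      simp only []
      rw [show (starRingEnd ℂ) (u t) * (((d t - μ : ℝ) : ℂ) * u t)
            = ((d t - μ : ℝ) : ℂ) * ((starRingEnd ℂ) (u t) * u t) by ring,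
          hconj_self t]
      push_cast
      ring
    have hsum0 : ∑ t, (d t - μ) * p t = 0 := by
      simp only [sub_mul]
      rw [Finset.sum_sub_distrib, ← Finset.mul_sum, hp1, hμ]
      ring
    have : c (Fin.last m) = ∑ t, (starRingEnd ℂ) (u t) * w t := by
      rw [hc]
    rw [this, Finset.sum_congr rfl fun t _ => hterm t]
    rw [show (∑ t, (((d t - μ) * p t : ℝ) : ℂ)) = ((∑ t, (d t - μ) * p t : ℝ) : ℂ) by push_cast; ring]
    rw [hsum0]
    norm_num
  -- variance lower bound
  have hpi : ε ^ 2 < p i := by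
    rw [hp]; simp only []
    nlinarith [norm_nonneg (u i)]
  have hpj : ε ^ 2 < p j := by
    rw [hp]; simp only []
    nlinarith [norm_nonneg (u j)]
  have hV2 : ε ^ 2 * δ ^ 2 / 2 < ∑ t, (d t - μ) ^ 2 * p t := by
    have hle : (d i - μ) ^ 2 * p i + (d j - μ) ^ 2 * p j ≤ ∑ t, (d t - μ) ^ 2 * p t := by
      have hle0 : (∑ t ∈ ({i, j} : Finset (Fin (m + 1))), (d t - μ) ^ 2 * p t)
          ≤ ∑ t, (d t - μ) ^ 2 * p t :=
        Finset.sum_le_sum_of_subset_of_nonneg (Finset.subset_univ _)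
          (fun t _ _ => mul_nonneg (sq_nonneg _) (hp0 t))
      rwa [Finset.sum_pair hij] at hle0
    have h2 : (d i - d j) ^ 2 ≤ 2 * (d i - μ) ^ 2 + 2 * (d j - μ) ^ 2 := by
      nlinarith [sq_nonneg (d i + d j - 2 * μ)]
    have hδ2AB : δ ^ 2 < 2 * (d i - μ) ^ 2 + 2 * (d j - μ) ^ 2 := lt_of_lt_of_le hdij h2
    nlinarith [mul_nonneg (sub_nonneg.mpr hpi.le) (sq_nonneg (d i - μ)),
      mul_nonneg (sub_nonneg.mpr hpj.le) (sq_nonneg (d j - μ)),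
      mul_pos (pow_pos hε 2) (sub_pos.mpr hδ2AB)]
  have hVc : ε ^ 2 * δ ^ 2 / 2 < ∑ a ∈ Finset.univ.erase (Fin.last m), Complex.normSq (c a) := by
    have hsplit : Complex.normSq (c (Fin.last m))
        + ∑ a ∈ Finset.univ.erase (Fin.last m), Complex.normSq (c a)
        = ∑ a, Complex.normSq (c a) :=
      Finset.add_sum_erase Finset.univ (fun a => Complex.normSq (c a))
        (Finset.mem_univ (Fin.last m))
    rw [hclast] at hsplit
    simp only [Complex.normSq_zero, zero_add] at hsplit
    rw [hsplit, hpar, Finset.sum_congr rfl fun t _ => hwns t]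
    exact hV2
  -- pigeonhole
  set B : ℝ := ε ^ 2 * δ ^ 2 / (2 * (m : ℝ)) with hB
  have hex : ∃ k ∈ Finset.univ.erase (Fin.last m), B < Complex.normSq (c k) := by
    by_contra hcon
    push_neg at hcon
    have hcard : (Finset.univ.erase (Fin.last m)).card = m := by
      rw [Finset.card_erase_of_mem (Finset.mem_univ _)]
      simp
    have hle := Finset.sum_le_card_nsmul (Finset.univ.erase (Fin.last m))
      (fun a => Complex.normSq (c a)) B (fun x hx => hcon x hx)
    rw [hcard, nsmul_eq_mul] at hle
    have hm' : (m : ℝ) ≠ 0 := Nat.cast_ne_zero.mpr hm.ne'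
    have hmB : (m : ℝ) * B = ε ^ 2 * δ ^ 2 / 2 := by
      rw [hB]
      field_simp
    rw [hmB] at hle
    linarith
  obtain ⟨k, hk, hkB⟩ := hex
  have hkne : k ≠ Fin.last m := Finset.ne_of_mem_erase hk
  refine ⟨k, hkne, ?_⟩
  -- identify the target with conj (c k)
  have horthk : ∑ t, (starRingEnd ℂ) (u t) * v k t = 0 := by
    rw [hu]; exact horth (Fin.last m) k (Ne.symm hkne)
  have expand : ∀ t, v k t * (((d t - μ : ℝ) : ℂ) * (starRingEnd ℂ) (u t))
      = (starRingEnd ℂ) (u t) * ((d t : ℂ) * v k t)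
        - ((μ : ℝ) : ℂ) * ((starRingEnd ℂ) (u t) * v k t) := by
    intro t; push_cast; ring
  have hT : (starRingEnd ℂ) (c k) = ∑ t, (starRingEnd ℂ) (u t) * ((d t : ℂ) * v k t) := by
    have h1 : (starRingEnd ℂ) (c k)
        = ∑ t, v k t * (((d t - μ : ℝ) : ℂ) * (starRingEnd ℂ) (u t)) := by
      rw [hc]; simp only []
      rw [map_sum]
      refine Finset.sum_congr rfl fun t _ => ?_
      rw [hw]; simp only []
      rw [_root_.map_mul, _root_.map_mul, Complex.conj_conj, Complex.conj_ofReal]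
    rw [h1, Finset.sum_congr rfl fun t _ => expand t, Finset.sum_sub_distrib,
      ← Finset.mul_sum, horthk, mul_zero, sub_zero]
  have habs : ‖∑ t, (starRingEnd ℂ) (u t) * ((d t : ℂ) * v k t)‖
      = ‖c k‖ := by
    rw [← hT, Complex.norm_conj]
  rw [habs]
  have hrhs : (ε * δ / Real.sqrt (2 * (m : ℝ))) ^ 2 = B := by
    rw [div_pow, Real.sq_sqrt (by positivity), hB]
    ring
  have hlt : (ε * δ / Real.sqrt (2 * (m : ℝ))) ^ 2 < ‖c k‖ ^ 2 := by
    rw [hrhs, Complex.sq_norm]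
    exact hkB
  exact lt_of_pow_lt_pow_left₀ 2 (norm_nonneg _) hlt
end

section
/- Let A, B ∈ ℂ^{n×n×n} and suppose for some mode d and eigenvalue indices i < j, G_d(B) has eigenvalue gap λ_i(G_d(B)) − λ_j(G_d(B)) < δ − 2ε, while every gap of G_d(A) between distinct sorted eigenvalues is at least δ. Then the unitary orbit distance satisfies dist_ℂ(A,B) > ε/(‖A‖_F + ‖B‖_F). -/
open Matrix

/-- The Frobenius norm of a 3-tensor. -/
noncomputable def tensorFrob {n : ℕ} (A : Fin n → Fin n → Fin n → ℂ) : ℝ :=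
  Real.sqrt (∑ i, ∑ j, ∑ k, ‖A i j k‖ ^ 2)

/-- Mode-`d` flattening, `d : Fin 3`. -/
def flattenMode {n : ℕ} (d : Fin 3) (X : Fin n → Fin n → Fin n → ℂ) :
    Matrix (Fin n) (Fin n × Fin n) ℂ :=
  match d with
  | 0 => Matrix.of fun i jk => X i jk.1 jk.2
  | 1 => Matrix.of fun j ik => X ik.1 j ik.2
  | 2 => Matrix.of fun k ij => X ij.1 ij.2 k

/-- Mode-`d` Gram matrix. -/
noncomputable def gramMode {n : ℕ} (d : Fin 3) (X : Fin n → Fin n → Fin n → ℂ) :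
    Matrix (Fin n) (Fin n) ℂ :=
  flattenMode d X * (flattenMode d X)ᴴ

/-- The unitary orbit distance between two 3-tensors. -/
noncomputable def unitaryOrbitDist {n : ℕ} (A B : Fin n → Fin n → Fin n → ℂ) : ℝ :=
  sInf {r : ℝ | ∃ L R T : Matrix (Fin n) (Fin n) ℂ,
    L ∈ Matrix.unitaryGroup (Fin n) ℂ ∧ R ∈ Matrix.unitaryGroup (Fin n) ℂ ∧
    T ∈ Matrix.unitaryGroup (Fin n) ℂ ∧ r = tensorFrob (tensorAct L R T A - B)}

/-! ### Auxiliary material for the proof -/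

open Finset
open scoped InnerProductSpace

attribute [local instance] Matrix.frobeniusSeminormedAddCommGroup
  Matrix.frobeniusNormedAddCommGroup
set_option linter.unusedSectionVars false
set_option maxHeartbeats 1600000

section frobHelpers
variable {m l p : Type*} [Fintype m] [Fintype l] [Fintype p] [DecidableEq m] [DecidableEq l]

lemma frob_def (M : Matrix m l ℂ) : ‖M‖ = Real.sqrt (∑ i, ∑ j, ‖M i j‖ ^ 2) := by
  rw [Matrix.frobenius_norm_def, Real.sqrt_eq_rpow]
  norm_num [Real.rpow_two]

lemma frob_sq (M : Matrix m l ℂ) : ‖M‖ ^ 2 = ∑ i, ∑ j, ‖M i j‖ ^ 2 := by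
  rw [frob_def, Real.sq_sqrt]
  positivity

lemma dot_star_self (x : m → ℂ) : star x ⬝ᵥ x = ((∑ i, ‖x i‖ ^ 2 : ℝ) : ℂ) := by
  simp only [dotProduct, Pi.star_apply, Complex.ofReal_sum]
  refine Finset.sum_congr rfl fun i _ => ?_
  rw [Complex.star_def, mul_comm, Complex.mul_conj]
  norm_cast
  rw [← Complex.sq_norm]

lemma mulVec_dot_invariant {V : Matrix m m ℂ} (hV : star V * V = 1) (x y : m → ℂ) :
    star (V *ᵥ x) ⬝ᵥ (V *ᵥ y) = star x ⬝ᵥ y := by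
  rw [star_mulVec, dotProduct_mulVec, vecMul_vecMul, ← Matrix.star_eq_conjTranspose, hV,
    vecMul_one]

lemma sum_sq_mulVec_invariant {V : Matrix m m ℂ} (hV : star V * V = 1) (x : m → ℂ) :
    ∑ i, ‖(V *ᵥ x) i‖ ^ 2 = ∑ i, ‖x i‖ ^ 2 := by
  have h := mulVec_dot_invariant hV x x
  rw [dot_star_self, dot_star_self] at h
  exact_mod_cast h

lemma frob_mul_left {V : Matrix m m ℂ} (hV : star V * V = 1) (P : Matrix m l ℂ) :
    ‖V * P‖ = ‖P‖ := by
  rw [frob_def, frob_def]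
  congr 1
  calc ∑ i, ∑ j, ‖(V * P) i j‖ ^ 2 = ∑ j, ∑ i, ‖(V * P) i j‖ ^ 2 := Finset.sum_comm
    _ = ∑ j, ∑ i, ‖P i j‖ ^ 2 := by
        refine Finset.sum_congr rfl fun j _ => ?_
        have := sum_sq_mulVec_invariant hV (fun p => P p j)
        simpa [Matrix.mulVec, Matrix.mul_apply, dotProduct] using this
    _ = ∑ i, ∑ j, ‖P i j‖ ^ 2 := Finset.sum_comm

lemma frob_mul_right {V : Matrix l l ℂ} (hV : V * star V = 1) (P : Matrix m l ℂ) :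
    ‖P * V‖ = ‖P‖ := by
  have hst : star Vᵀ = (star V)ᵀ := by
    ext i j
    simp [Matrix.star_eq_conjTranspose, Matrix.conjTranspose_apply, Matrix.transpose_apply]
  have h2 : star Vᵀ * Vᵀ = 1 := by
    rw [hst, ← Matrix.transpose_mul, hV, Matrix.transpose_one]
  calc ‖P * V‖ = ‖(P * V)ᵀ‖ := (Matrix.frobenius_norm_transpose _).symm
    _ = ‖Vᵀ * Pᵀ‖ := by rw [Matrix.transpose_mul]
    _ = ‖Pᵀ‖ := frob_mul_left h2 _
    _ = ‖P‖ := Matrix.frobenius_norm_transpose _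

lemma opbound (P : Matrix m l ℂ) (x : l → ℂ) :
    ∑ i, ‖(P *ᵥ x) i‖ ^ 2 ≤ ‖P‖ ^ 2 * ∑ j, ‖x j‖ ^ 2 := by
  rw [frob_sq, Finset.sum_mul]
  refine Finset.sum_le_sum fun i _ => ?_
  calc ‖(P *ᵥ x) i‖ ^ 2 ≤ (∑ j, ‖P i j‖ * ‖x j‖) ^ 2 := by
        refine pow_le_pow_left₀ (norm_nonneg _) ?_ 2
        refine (norm_sum_le _ _).trans_eq ?_
        exact Finset.sum_congr rfl fun j _ => norm_mul _ _
    _ ≤ (∑ j, ‖P i j‖ ^ 2) * ∑ j, ‖x j‖ ^ 2 := Finset.sum_mul_sq_le_sq_mul_sq _ _ _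
end frobHelpers

noncomputable def emulE {n : ℕ} (M : Matrix (Fin n) (Fin n) ℂ) (x : EuclideanSpace ℂ (Fin n)) :
    EuclideanSpace ℂ (Fin n) :=
  (WithLp.equiv 2 _).symm (M *ᵥ (WithLp.equiv 2 _ x))

section euclidGlue
variable {n : ℕ}

lemma emulE_eq_lin (M : Matrix (Fin n) (Fin n) ℂ) (x : EuclideanSpace ℂ (Fin n)) :
    emulE M x = Matrix.toEuclideanLin M x := rfl

lemma emulE_mul (P Q : Matrix (Fin n) (Fin n) ℂ) (x : EuclideanSpace ℂ (Fin n)) :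
    emulE (P * Q) x = emulE P (emulE Q x) := by
  unfold emulE
  simp [Matrix.mulVec_mulVec]

lemma emulE_one (x : EuclideanSpace ℂ (Fin n)) : emulE 1 x = x := by
  unfold emulE
  simp

lemma emulE_smul (P : Matrix (Fin n) (Fin n) ℂ) (c : ℂ) (x : EuclideanSpace ℂ (Fin n)) :
    emulE P (c • x) = c • emulE P x := by
  simp only [emulE_eq_lin, LinearMap.map_smul]

lemma emulE_sub (M N : Matrix (Fin n) (Fin n) ℂ) (x : EuclideanSpace ℂ (Fin n)) :
    emulE (M - N) x = emulE M x - emulE N x := by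
  simp only [emulE_eq_lin, map_sub, LinearMap.sub_apply]

lemma emulE_add_smul (P : Matrix (Fin n) (Fin n) ℂ) (c₁ c₂ : ℂ)
    (x y : EuclideanSpace ℂ (Fin n)) :
    emulE P (c₁ • x + c₂ • y) = c₁ • emulE P x + c₂ • emulE P y := by
  simp only [emulE_eq_lin, map_add, LinearMap.map_smul]

lemma emulE_norm_le (P : Matrix (Fin n) (Fin n) ℂ) (x : EuclideanSpace ℂ (Fin n)) :
    ‖emulE P x‖ ≤ ‖P‖ * ‖x‖ := by
  rw [EuclideanSpace.norm_eq (emulE P x), EuclideanSpace.norm_eq x]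
  have h := opbound P (fun j => x j)
  have hpt : ∀ i, emulE P x i = (P *ᵥ (fun j => x j)) i := fun i => rfl
  have h2 : ∑ i, ‖emulE P x i‖ ^ 2 ≤ ‖P‖ ^ 2 * ∑ j, ‖x j‖ ^ 2 := by
    calc ∑ i, ‖emulE P x i‖ ^ 2 = ∑ i, ‖(P *ᵥ (fun j => x j)) i‖ ^ 2 := by
          exact Finset.sum_congr rfl fun i _ => by rw [hpt i]
      _ ≤ _ := h
  calc Real.sqrt (∑ i, ‖emulE P x i‖ ^ 2) ≤ Real.sqrt (‖P‖ ^ 2 * ∑ j, ‖x j‖ ^ 2) :=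
        Real.sqrt_le_sqrt h2
    _ = ‖P‖ * Real.sqrt (∑ j, ‖x j‖ ^ 2) := by
        rw [Real.sqrt_mul (sq_nonneg _), Real.sqrt_sq (norm_nonneg P)]

lemma emulE_unitary_inner {V : Matrix (Fin n) (Fin n) ℂ} (hV : star V * V = 1)
    (x y : EuclideanSpace ℂ (Fin n)) : ⟪emulE V x, emulE V y⟫_ℂ = ⟪x, y⟫_ℂ := by
  rw [EuclideanSpace.inner_eq_star_dotProduct, EuclideanSpace.inner_eq_star_dotProduct]
  exact (dotProduct_comm _ _).trans ((mulVec_dot_invariant hV (WithLp.ofLp x) (WithLp.ofLp y)).trans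
    (dotProduct_comm _ _))

lemma emulE_unitary_norm {V : Matrix (Fin n) (Fin n) ℂ} (hV : star V * V = 1)
    (x : EuclideanSpace ℂ (Fin n)) : ‖emulE V x‖ = ‖x‖ := by
  have h := emulE_unitary_inner hV x x
  rw [@norm_eq_sqrt_re_inner ℂ, @norm_eq_sqrt_re_inner ℂ (x := x), h]

lemma herm_emulE {M : Matrix (Fin n) (Fin n) ℂ} (hM : M.IsHermitian) (k : Fin n) :
    emulE M (hM.eigenvectorBasis k) = (hM.eigenvalues k : ℂ) • hM.eigenvectorBasis k := by
  have h := hM.mulVec_eigenvectorBasis k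
  unfold emulE
  rw [WithLp.equiv_apply, h]
  ext i
  simp [Complex.real_smul]

end euclidGlue
section spectral
variable {n : ℕ}

lemma spectral_core (M N : Matrix (Fin n) (Fin n) ℂ)
    (b : OrthonormalBasis (Fin n) ℂ (EuclideanSpace ℂ (Fin n))) (lam : Fin n → ℝ)
    (hMb : ∀ k, emulE M (b k) = (lam k : ℂ) • b k)
    (δ ε₀ : ℝ) (hε₀ : 0 < ε₀)
    (hgap : ∀ k l : Fin n, k ≠ l → δ ≤ |lam k - lam l|)
    (v₁ v₂ : EuclideanSpace ℂ (Fin n)) (μ₁ μ₂ : ℝ)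
    (hv₁ : ‖v₁‖ = 1) (hv₂ : ‖v₂‖ = 1) (hv12 : ⟪v₁, v₂⟫_ℂ = 0)
    (hNv₁ : emulE N v₁ = (μ₁ : ℂ) • v₁) (hNv₂ : emulE N v₂ = (μ₂ : ℂ) • v₂)
    (hsmall : 2 * ε₀ + |μ₁ - μ₂| < δ)
    (hop : ∀ x, ‖emulE (M - N) x‖ ≤ ε₀ * ‖x‖) : False := by
  have hδpos : 0 < δ := by
    have := abs_nonneg (μ₁ - μ₂); linarith
  -- coefficient formula
  have coef : ∀ (x : EuclideanSpace ℂ (Fin n)) (k : Fin n),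
      b.repr (emulE M x) k = (lam k : ℂ) * b.repr x k := by
    intro x k
    have hexp : emulE M x = ∑ l, ((lam l : ℂ) * b.repr x l) • b l := by
      conv_lhs => rw [← b.sum_repr x]
      rw [emulE_eq_lin, map_sum]
      refine Finset.sum_congr rfl fun l _ => ?_
      rw [_root_.map_smul, ← emulE_eq_lin, hMb l, smul_smul, mul_comm]
    rw [b.repr_apply_apply, hexp, b.orthonormal.inner_right_fintype]
  have coef2 : ∀ (x : EuclideanSpace ℂ (Fin n)) (t : ℝ) (k : Fin n),
      b.repr (emulE M x - (t : ℂ) • x) k = ((lam k - t : ℝ) : ℂ) * b.repr x k := by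
    intro x t k
    rw [map_sub, _root_.map_smul]
    have h1 : (b.repr (emulE M x) - (t : ℂ) • b.repr x) k
        = b.repr (emulE M x) k - (t : ℂ) * b.repr x k := rfl
    rw [h1, coef]
    push_cast
    ring
  -- Parseval
  have parseval : ∀ y : EuclideanSpace ℂ (Fin n), ‖y‖ ^ 2 = ∑ k, ‖b.repr y k‖ ^ 2 := by
    intro y
    rw [← b.repr.norm_map y, EuclideanSpace.norm_eq, Real.sq_sqrt (by positivity)]
  have hMsq : ∀ (x : EuclideanSpace ℂ (Fin n)) (t : ℝ),
      ‖emulE M x - (t : ℂ) • x‖ ^ 2 = ∑ k, (lam k - t) ^ 2 * ‖b.repr x k‖ ^ 2 := by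
    intro x t
    rw [parseval]
    refine Finset.sum_congr rfl fun k _ => ?_
    rw [coef2, norm_mul, mul_pow, Complex.norm_real, Real.norm_eq_abs, sq_abs]
  -- every N-eigenvalue is ε₀-close to some lam
  have exists_close : ∀ (v : EuclideanSpace ℂ (Fin n)) (μ : ℝ), ‖v‖ = 1 →
      emulE N v = (μ : ℂ) • v → ∃ a, |lam a - μ| ≤ ε₀ := by
    intro v μ hv hNv
    by_contra hcon
    push_neg at hcon
    have hdiff : emulE M v - (μ : ℂ) • v = emulE (M - N) v := by
      rw [emulE_sub, hNv]
    have hle : ‖emulE M v - (μ : ℂ) • v‖ ≤ ε₀ := by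
      rw [hdiff]
      simpa [hv] using hop v
    have hone : ∑ k, ‖b.repr v k‖ ^ 2 = 1 := by
      rw [← parseval, hv]; norm_num
    obtain ⟨k₀, hk₀⟩ : ∃ k, b.repr v k ≠ 0 := by
      by_contra h
      push_neg at h
      simp [h] at hone
    have hlt : ε₀ ^ 2 < ∑ k, (lam k - μ) ^ 2 * ‖b.repr v k‖ ^ 2 := by
      calc ε₀ ^ 2 = ∑ k, ε₀ ^ 2 * ‖b.repr v k‖ ^ 2 := by
            rw [← Finset.mul_sum, hone, mul_one]
        _ < ∑ k, (lam k - μ) ^ 2 * ‖b.repr v k‖ ^ 2 := by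
            refine Finset.sum_lt_sum (fun k _ => ?_) ⟨k₀, Finset.mem_univ _, ?_⟩
            · have h1 : ε₀ ^ 2 ≤ (lam k - μ) ^ 2 := by
                have := (hcon k).le
                nlinarith [sq_abs (lam k - μ), abs_nonneg (lam k - μ)]
              nlinarith [sq_nonneg (‖b.repr v k‖)]
            · have h1 : ε₀ ^ 2 < (lam k₀ - μ) ^ 2 := by
                have := hcon k₀
                nlinarith [sq_abs (lam k₀ - μ), abs_nonneg (lam k₀ - μ)]
              have h2 : 0 < ‖b.repr v k₀‖ ^ 2 := by
                have := norm_pos_iff.2 hk₀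
                positivity
              nlinarith
    rw [← hMsq] at hlt
    nlinarith [norm_nonneg (emulE M v - (μ : ℂ) • v)]
  obtain ⟨a₁, ha₁⟩ := exists_close v₁ μ₁ hv₁ hNv₁
  obtain ⟨a₂, ha₂⟩ := exists_close v₂ μ₂ hv₂ hNv₂
  by_cases hA : a₁ = a₂
  case neg =>
    have hg := hgap a₁ a₂ hA
    have t1 : |lam a₁ - lam a₂| ≤ |lam a₁ - μ₁| + |μ₁ - lam a₂| := abs_sub_le _ _ _
    have t2 : |μ₁ - lam a₂| ≤ |μ₁ - μ₂| + |μ₂ - lam a₂| := abs_sub_le _ _ _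
    have t3 : |μ₂ - lam a₂| = |lam a₂ - μ₂| := abs_sub_comm _ _
    linarith
  case pos =>
    subst hA
    set p := b.repr v₁ a₁ with hp
    set q := b.repr v₂ a₁ with hq
    obtain ⟨c₁, c₂, hc, hker⟩ : ∃ c₁ c₂ : ℂ, ‖c₁‖ ^ 2 + ‖c₂‖ ^ 2 = 1 ∧ c₁ * p + c₂ * q = 0 := by
      by_cases hpq : p = 0 ∧ q = 0
      · exact ⟨1, 0, by norm_num, by simp [hpq.1]⟩
      · have hs0 : 0 < ‖p‖ ^ 2 + ‖q‖ ^ 2 := by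
          rcases not_and_or.mp hpq with h | h
          · have := norm_pos_iff.2 h
            nlinarith [sq_nonneg ‖q‖]
          · have := norm_pos_iff.2 h
            nlinarith [sq_nonneg ‖p‖]
        set s := Real.sqrt (‖p‖ ^ 2 + ‖q‖ ^ 2) with hs
        have hspos : 0 < s := Real.sqrt_pos.2 hs0
        have hssq : s ^ 2 = ‖p‖ ^ 2 + ‖q‖ ^ 2 := Real.sq_sqrt hs0.le
        refine ⟨q / (s : ℂ), -p / (s : ℂ), ?_, ?_⟩
        · have hns : ‖(s : ℂ)‖ = s := by
            rw [Complex.norm_real, Real.norm_eq_abs, abs_of_pos hspos]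
          rw [norm_div, norm_div, norm_neg, hns, div_pow, div_pow]
          rw [← add_div, hssq, add_comm (‖q‖ ^ 2)]
          exact div_self hs0.ne' 
        · have hsne : (s : ℂ) ≠ 0 := by
            simpa using hspos.ne'
          field_simp
          ring
    set w := c₁ • v₁ + c₂ • v₂ with hw
    have h12 : ⟪c₁ • v₁, c₂ • v₂⟫_ℂ = 0 := by
      rw [inner_smul_left, inner_smul_right, hv12]
      ring
    have hw1 : ‖w‖ ^ 2 = 1 := by
      rw [hw, @norm_add_sq ℂ, h12]
      simp only [map_zero, mul_zero, add_zero]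
      rw [norm_smul, norm_smul, hv₁, hv₂]
      simpa using hc
    have hwn : ‖w‖ = 1 := by
      nlinarith [norm_nonneg w]
    have hda : b.repr w a₁ = 0 := by
      have : b.repr w = c₁ • b.repr v₁ + c₂ • b.repr v₂ := by
        rw [hw, map_add, _root_.map_smul, _root_.map_smul]
      rw [this]
      show c₁ * p + c₂ * q = 0
      exact hker
    set z := emulE M w - ((lam a₁ : ℝ) : ℂ) • w with hz
    -- lower bound
    have hzsq : ‖z‖ ^ 2 = ∑ k, (lam k - lam a₁) ^ 2 * ‖b.repr w k‖ ^ 2 := hMsq w (lam a₁)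
    have hsumw : ∑ k, ‖b.repr w k‖ ^ 2 = 1 := by rw [← parseval, hwn]; norm_num
    have hlow : δ ^ 2 ≤ ‖z‖ ^ 2 := by
      rw [hzsq]
      rw [← Finset.add_sum_erase _ _ (Finset.mem_univ a₁)]
      rw [show (lam a₁ - lam a₁) ^ 2 * ‖b.repr w a₁‖ ^ 2 = 0 by simp, zero_add]
      have h1 : ∑ k ∈ Finset.univ.erase a₁, δ ^ 2 * ‖b.repr w k‖ ^ 2
          ≤ ∑ k ∈ Finset.univ.erase a₁, (lam k - lam a₁) ^ 2 * ‖b.repr w k‖ ^ 2 := by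
        refine Finset.sum_le_sum fun k hk => ?_
        have hne : k ≠ a₁ := Finset.ne_of_mem_erase hk
        have := hgap k a₁ hne
        have hsq : δ ^ 2 ≤ (lam k - lam a₁) ^ 2 := by
          nlinarith [sq_abs (lam k - lam a₁), abs_nonneg (lam k - lam a₁)]
        nlinarith [sq_nonneg ‖b.repr w k‖]
      have h2 : ∑ k ∈ Finset.univ.erase a₁, ‖b.repr w k‖ ^ 2 = 1 := by
        rw [Finset.sum_erase_eq_sub (Finset.mem_univ a₁), hsumw, hda]
        norm_num
      calc δ ^ 2 = δ ^ 2 * ∑ k ∈ Finset.univ.erase a₁, ‖b.repr w k‖ ^ 2 := by rw [h2, mul_one]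
        _ = ∑ k ∈ Finset.univ.erase a₁, δ ^ 2 * ‖b.repr w k‖ ^ 2 := Finset.mul_sum _ _ _
        _ ≤ _ := h1
    have hlow' : δ ≤ ‖z‖ := by nlinarith [norm_nonneg z]
    -- upper bound
    have hzdecomp : z = emulE (M - N) w + (emulE N w - (μ₁ : ℂ) • w)
        + (((μ₁ - lam a₁ : ℝ) : ℂ)) • w := by
      rw [hz, emulE_sub, Complex.ofReal_sub, sub_smul]
      abel
    have hNw : emulE N w - (μ₁ : ℂ) • w = (c₂ * ((μ₂ : ℂ) - (μ₁ : ℂ))) • v₂ := by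
      rw [hw, emulE_add_smul, hNv₁, hNv₂]
      module
    have hb1 : ‖emulE (M - N) w‖ ≤ ε₀ := by
      simpa [hwn] using hop w
    have hc2 : ‖c₂‖ ≤ 1 := by nlinarith [norm_nonneg c₁, norm_nonneg c₂]
    have hb2 : ‖emulE N w - (μ₁ : ℂ) • w‖ ≤ |μ₁ - μ₂| := by
      rw [hNw, norm_smul, hv₂, mul_one, norm_mul]
      have : ‖((μ₂ : ℂ) - (μ₁ : ℂ))‖ = |μ₁ - μ₂| := by
        rw [← Complex.ofReal_sub, Complex.norm_real, Real.norm_eq_abs, abs_sub_comm]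
      rw [this]
      nlinarith [abs_nonneg (μ₁ - μ₂), norm_nonneg c₂]
    have hb3 : ‖(((μ₁ - lam a₁ : ℝ) : ℂ)) • w‖ ≤ ε₀ := by
      rw [norm_smul, hwn, mul_one, Complex.norm_real, Real.norm_eq_abs, abs_sub_comm]
      exact ha₁
    have hup : ‖z‖ < δ := by
      calc ‖z‖ ≤ ‖emulE (M - N) w‖ + ‖emulE N w - (μ₁ : ℂ) • w‖
          + ‖(((μ₁ - lam a₁ : ℝ) : ℂ)) • w‖ := by
            rw [hzdecomp]; exact norm_add₃_le
        _ ≤ ε₀ + |μ₁ - μ₂| + ε₀ := by linarith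
        _ < δ := by linarith
    linarith

end spectral
section tensor
variable {n : ℕ}

def kron2 (V W : Matrix (Fin n) (Fin n) ℂ) : Matrix (Fin n × Fin n) (Fin n × Fin n) ℂ :=
  Matrix.of fun a b => V a.1 b.1 * W a.2 b.2

lemma star_transpose (M : Matrix (Fin n × Fin n) (Fin n × Fin n) ℂ) :
    star Mᵀ = (star M)ᵀ := by
  ext a b
  simp [Matrix.star_eq_conjTranspose, Matrix.conjTranspose_apply, Matrix.transpose_apply]

lemma kron2_star_mul {V W : Matrix (Fin n) (Fin n) ℂ}
    (hV : star V * V = 1) (hW : star W * W = 1) :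
    star (kron2 V W) * kron2 V W = 1 := by
  ext a b
  obtain ⟨q, r⟩ := a
  obtain ⟨q', r'⟩ := b
  have hVe : ∑ j, star (V j q) * V j q' = (1 : Matrix (Fin n) (Fin n) ℂ) q q' := by
    have := congrFun (congrFun hV q) q'
    simpa [Matrix.mul_apply, Matrix.star_eq_conjTranspose, Matrix.conjTranspose_apply] using this
  have hWe : ∑ k, star (W k r) * W k r' = (1 : Matrix (Fin n) (Fin n) ℂ) r r' := by
    have := congrFun (congrFun hW r) r'
    simpa [Matrix.mul_apply, Matrix.star_eq_conjTranspose, Matrix.conjTranspose_apply] using this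
  have lhs : (star (kron2 V W) * kron2 V W) (q, r) (q', r')
      = (∑ j, star (V j q) * V j q') * (∑ k, star (W k r) * W k r') := by
    rw [Finset.sum_mul_sum]
    simp only [Matrix.mul_apply, Matrix.star_eq_conjTranspose, Matrix.conjTranspose_apply,
      kron2, Matrix.of_apply, Fintype.sum_prod_type, star_mul']
    refine Finset.sum_congr rfl fun j _ => Finset.sum_congr rfl fun k _ => by ring
  rw [lhs, hVe, hWe]
  by_cases hq : q = q' <;> by_cases hr : r = r' <;>
    simp [Matrix.one_apply, hq, hr, Prod.ext_iff]

lemma flatten_act {L R T : Matrix (Fin n) (Fin n) ℂ}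
    (hL : L ∈ Matrix.unitaryGroup (Fin n) ℂ) (hR : R ∈ Matrix.unitaryGroup (Fin n) ℂ)
    (hT : T ∈ Matrix.unitaryGroup (Fin n) ℂ) (d : Fin 3) :
    ∃ U : Matrix (Fin n) (Fin n) ℂ, ∃ Q : Matrix (Fin n × Fin n) (Fin n × Fin n) ℂ,
      U ∈ Matrix.unitaryGroup (Fin n) ℂ ∧ star Q * Q = 1 ∧
      ∀ X, flattenMode d (tensorAct L R T X) = U * flattenMode d X * Qᵀ := by
  have hL' := (Matrix.mem_unitaryGroup_iff').mp hL
  have hR' := (Matrix.mem_unitaryGroup_iff').mp hR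
  have hT' := (Matrix.mem_unitaryGroup_iff').mp hT
  fin_cases d
  · refine ⟨L, kron2 R T, hL, kron2_star_mul hR' hT', fun X => ?_⟩
    ext i jk
    obtain ⟨j, k⟩ := jk
    simp only [flattenMode, tensorAct, kron2, Matrix.mul_apply, Matrix.transpose_apply,
      Matrix.of_apply, Fintype.sum_prod_type, Finset.sum_mul, Finset.mul_sum]
    rw [Finset.sum_comm]
    refine Finset.sum_congr rfl fun q _ => ?_
    rw [Finset.sum_comm]
    refine Finset.sum_congr rfl fun r _ => Finset.sum_congr rfl fun p _ => by ring
  · refine ⟨R, kron2 L T, hR, kron2_star_mul hL' hT', fun X => ?_⟩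
    ext j ik
    obtain ⟨i, k⟩ := ik
    simp only [flattenMode, tensorAct, kron2, Matrix.mul_apply, Matrix.transpose_apply,
      Matrix.of_apply, Fintype.sum_prod_type, Finset.sum_mul, Finset.mul_sum]
    refine Finset.sum_congr rfl fun p _ => ?_
    rw [Finset.sum_comm]
    refine Finset.sum_congr rfl fun r _ => Finset.sum_congr rfl fun q _ => by ring
  · refine ⟨T, kron2 L R, hT, kron2_star_mul hL' hR', fun X => ?_⟩
    ext k ij
    obtain ⟨i, j⟩ := ij
    simp only [flattenMode, tensorAct, kron2, Matrix.mul_apply, Matrix.transpose_apply,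
      Matrix.of_apply, Fintype.sum_prod_type, Finset.sum_mul, Finset.mul_sum]
    refine Finset.sum_congr rfl fun p _ => Finset.sum_congr rfl fun q _ =>
      Finset.sum_congr rfl fun r _ => by ring

lemma gram_act {L R T : Matrix (Fin n) (Fin n) ℂ}
    (hL : L ∈ Matrix.unitaryGroup (Fin n) ℂ) (hR : R ∈ Matrix.unitaryGroup (Fin n) ℂ)
    (hT : T ∈ Matrix.unitaryGroup (Fin n) ℂ) (d : Fin 3) (A : Fin n → Fin n → Fin n → ℂ) :
    ∃ U : Matrix (Fin n) (Fin n) ℂ, U ∈ Matrix.unitaryGroup (Fin n) ℂ ∧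
      gramMode d (tensorAct L R T A) = U * gramMode d A * star U ∧
      ‖flattenMode d (tensorAct L R T A)‖ = ‖flattenMode d A‖ := by
  obtain ⟨U, Q, hU, hQ, hflat⟩ := flatten_act hL hR hT d
  have hQ2 : Q * star Q = 1 := mul_eq_one_comm.mpr hQ
  have hQT : Qᵀ * (Qᵀ)ᴴ = 1 := by
    have h1 : (Qᵀ)ᴴ = (star Q)ᵀ := by
      rw [← Matrix.star_eq_conjTranspose, star_transpose]
    rw [h1, ← Matrix.transpose_mul, hQ, Matrix.transpose_one]
  have hQT2 : Qᵀ * star Qᵀ = 1 := by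
    rw [Matrix.star_eq_conjTranspose]; exact hQT
  refine ⟨U, hU, ?_, ?_⟩
  · rw [gramMode, gramMode, hflat A, Matrix.conjTranspose_mul, Matrix.conjTranspose_mul,
      Matrix.star_eq_conjTranspose]
    simp only [Matrix.mul_assoc]
    rw [← Matrix.mul_assoc Qᵀ, hQT, Matrix.one_mul]
  · rw [hflat A, Matrix.mul_assoc]
    rw [frob_mul_left ((Matrix.mem_unitaryGroup_iff').mp hU)]
    exact frob_mul_right (by rw [← Matrix.star_eq_conjTranspose] at hQT; exact hQT) _

lemma flatten_sub (d : Fin 3) (X Y : Fin n → Fin n → Fin n → ℂ) :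
    flattenMode d (X - Y) = flattenMode d X - flattenMode d Y := by
  fin_cases d <;> (ext i jk; rfl)

lemma tensorFrob_eq_frob (d : Fin 3) (X : Fin n → Fin n → Fin n → ℂ) :
    tensorFrob X = ‖flattenMode d X‖ := by
  fin_cases d <;> rw [frob_def, tensorFrob] <;> congr 1 <;>
    simp only [flattenMode, Matrix.of_apply, Fintype.sum_prod_type]
  · exact Finset.sum_comm
  · calc ∑ i, ∑ j, ∑ k, ‖X i j k‖ ^ 2
        = ∑ i, ∑ k, ∑ j, ‖X i j k‖ ^ 2 :=
          Finset.sum_congr rfl fun i _ => Finset.sum_comm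
      _ = ∑ k, ∑ i, ∑ j, ‖X i j k‖ ^ 2 := Finset.sum_comm
end tensor

/-- If for some mode `d` the Gram matrix of `B` has two eigenvalues at distance `< δ - 2ε`
while all distinct eigenvalues of the Gram matrix of `A` are `≥ δ` apart, then the unitary
orbit distance satisfies `dist_ℂ(A,B) > ε / (‖A‖_F + ‖B‖_F)`. -/
theorem orbit_distance_gap_lower_bound {n : ℕ}
    (A B : Fin n → Fin n → Fin n → ℂ)
    (ε δ : ℝ) (hε : 0 < ε) (hδ : 0 < δ)
    (d : Fin 3)
    (hHA : (gramMode d A).IsHermitian) (hHB : (gramMode d B).IsHermitian)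
    (hgapA : ∀ i j : Fin n, i ≠ j → |hHA.eigenvalues i - hHA.eigenvalues j| ≥ δ)
    (hgapB : ∃ i j : Fin n, i ≠ j ∧ |hHB.eigenvalues i - hHB.eigenvalues j| < δ - 2 * ε) :
    unitaryOrbitDist A B > ε / (tensorFrob A + tensorFrob B) := by
  classical
  obtain ⟨i, j, hij, hBgap⟩ := hgapB
  set μ₁ := hHB.eigenvalues i with hμ₁
  set μ₂ := hHB.eigenvalues j with hμ₂
  set g := |μ₁ - μ₂| with hgdef
  have hg0 : 0 ≤ g := abs_nonneg _
  set ε₀ := (ε + (δ - g) / 2) / 2 with hε₀def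
  have hεε₀ : ε < ε₀ := by rw [hε₀def]; linarith
  have hε₀pos : 0 < ε₀ := hε.trans hεε₀
  have hsmall : 2 * ε₀ + g < δ := by rw [hε₀def]; linarith
  -- `A ≠ 0`, else the eigenvalue gap hypothesis for `A` is contradictory
  have htfA : tensorFrob A ≠ 0 := by
    intro h0
    have hA : A = 0 := by
      have hnn : (0:ℝ) ≤ ∑ i', ∑ j', ∑ k', ‖A i' j' k'‖ ^ 2 := by positivity
      have hsum : ∑ i', ∑ j', ∑ k', ‖A i' j' k'‖ ^ 2 = 0 := by
        rw [tensorFrob] at h0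
        exact (Real.sqrt_eq_zero hnn).mp h0
      funext p q r
      have h1 := (Finset.sum_eq_zero_iff_of_nonneg
        (fun _ _ => by positivity)).mp hsum p (Finset.mem_univ p)
      have h2 := (Finset.sum_eq_zero_iff_of_nonneg
        (fun _ _ => by positivity)).mp h1 q (Finset.mem_univ q)
      have h3 := (Finset.sum_eq_zero_iff_of_nonneg
        (fun _ _ => by positivity)).mp h2 r (Finset.mem_univ r)
      have h4 := pow_eq_zero_iff (n := 2) (by norm_num) |>.mp h3
      simpa using h4
    have hgram : gramMode d A = 0 := by
      rw [hA]
      have hf : flattenMode d (0 : Fin n → Fin n → Fin n → ℂ) = 0 := by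
        fin_cases d <;> rfl
      rw [gramMode, hf, Matrix.zero_mul]
    have hzero : ∀ k, hHA.eigenvalues k = 0 := by
      intro k
      have h1 := hHA.mulVec_eigenvectorBasis k
      set v : Fin n → ℂ := (WithLp.equiv 2 ((i : Fin n) → ℂ)) (hHA.eigenvectorBasis k) with hv
      set lamk : ℝ := hHA.eigenvalues k with hlamk
      have h0' : ∀ w, gramMode d A *ᵥ w = 0 := fun w => by rw [hgram, Matrix.zero_mulVec]
      rw [h0'] at h1
      rcases smul_eq_zero.mp h1.symm with h | h
      · exact h
      · exfalso
        have hb : hHA.eigenvectorBasis k = 0 := by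
          apply (WithLp.equiv 2 ((i : Fin n) → ℂ)).injective
          rw [← hv]
          simpa [hv] using h
        have hno := hHA.eigenvectorBasis.orthonormal.1 k
        rw [hb] at hno
        simp at hno
    have hcontr := hgapA i j hij
    rw [hzero i, hzero j] at hcontr
    simp at hcontr
    linarith
  have htfA' : 0 ≤ tensorFrob A := Real.sqrt_nonneg _
  have htfB' : 0 ≤ tensorFrob B := Real.sqrt_nonneg _
  have hSpos : 0 < tensorFrob A + tensorFrob B := by
    rcases lt_or_eq_of_le htfA' with h | h
    · linarith
    · exact absurd h.symm htfA
  set S := tensorFrob A + tensorFrob B with hSdef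
  -- lower bound for every member of the distance set
  have key : ∀ r' ∈ {r : ℝ | ∃ L R T : Matrix (Fin n) (Fin n) ℂ,
      L ∈ Matrix.unitaryGroup (Fin n) ℂ ∧ R ∈ Matrix.unitaryGroup (Fin n) ℂ ∧
      T ∈ Matrix.unitaryGroup (Fin n) ℂ ∧ r = tensorFrob (tensorAct L R T A - B)},
      ε₀ / S ≤ r' := by
    rintro r' ⟨L, R, T, hL, hR, hT, rfl⟩
    set r := tensorFrob (tensorAct L R T A - B) with hrdef
    have hr0 : 0 ≤ r := Real.sqrt_nonneg _
    obtain ⟨U, hU, hgram, hfrobinv⟩ := gram_act hL hR hT d A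
    have hU1 : star U * U = 1 := Matrix.mem_unitaryGroup_iff'.mp hU
    have hU2 : U * star U = 1 := Matrix.mem_unitaryGroup_iff.mp hU
    have hSU : star (star U) * star U = 1 := by rw [star_star]; exact hU2
    set X := flattenMode d (tensorAct L R T A) with hX
    set Y := flattenMode d B with hY
    have hXY : ‖X - Y‖ = r := by
      rw [hrdef, tensorFrob_eq_frob d, flatten_sub]
    have hXn : ‖X‖ = tensorFrob A := by rw [hX, hfrobinv, ← tensorFrob_eq_frob]
    have hYn : ‖Y‖ = tensorFrob B := (tensorFrob_eq_frob d B).symm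
    have hdiff : gramMode d (tensorAct L R T A) - gramMode d B
        = X * (X - Y)ᴴ + (X - Y) * Yᴴ := by
      rw [gramMode, gramMode, Matrix.conjTranspose_sub, Matrix.mul_sub, Matrix.sub_mul]
      abel
    have hnorm1 : ‖gramMode d (tensorAct L R T A) - gramMode d B‖ ≤ S * r := by
      rw [hdiff]
      calc ‖X * (X - Y)ᴴ + (X - Y) * Yᴴ‖
          ≤ ‖X * (X - Y)ᴴ‖ + ‖(X - Y) * Yᴴ‖ := norm_add_le _ _
        _ ≤ ‖X‖ * ‖(X - Y)ᴴ‖ + ‖X - Y‖ * ‖Yᴴ‖ :=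
            add_le_add (Matrix.frobenius_norm_mul _ _) (Matrix.frobenius_norm_mul _ _)
        _ = S * r := by
            rw [Matrix.frobenius_norm_conjTranspose, Matrix.frobenius_norm_conjTranspose,
              hXY, hXn, hYn, hSdef]
            ring
    set N' := star U * gramMode d B * U with hN'
    have hGA : star U * gramMode d (tensorAct L R T A) * U = gramMode d A := by
      rw [hgram]
      calc star U * (U * gramMode d A * star U) * U
          = (star U * U) * gramMode d A * (star U * U) := by
            simp only [Matrix.mul_assoc]
        _ = gramMode d A := by rw [hU1, Matrix.one_mul, Matrix.mul_one]
    have hdiff2 : gramMode d A - N'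
        = star U * (gramMode d (tensorAct L R T A) - gramMode d B) * U := by
      rw [Matrix.mul_sub, Matrix.sub_mul, hGA]
    have hnormconj : ‖gramMode d A - N'‖
        = ‖gramMode d (tensorAct L R T A) - gramMode d B‖ := by
      rw [hdiff2, frob_mul_right hU2, frob_mul_left hSU]
    have hstrict : ε₀ < ‖gramMode d A - N'‖ := by
      by_contra hcon
      push_neg at hcon
      have e1 : ∀ y : EuclideanSpace ℂ (Fin n), emulE U (emulE (star U) y) = y := by
        intro y
        rw [← emulE_mul, hU2, emulE_one]
      refine spectral_core (gramMode d A) N' hHA.eigenvectorBasis hHA.eigenvalues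
        (fun k => herm_emulE hHA k) δ ε₀ hε₀pos (fun k l h => hgapA k l h)
        (emulE (star U) (hHB.eigenvectorBasis i)) (emulE (star U) (hHB.eigenvectorBasis j))
        μ₁ μ₂ ?_ ?_ ?_ ?_ ?_ (by exact hsmall) ?_
      · rw [emulE_unitary_norm hSU]
        exact hHB.eigenvectorBasis.orthonormal.1 i
      · rw [emulE_unitary_norm hSU]
        exact hHB.eigenvectorBasis.orthonormal.1 j
      · rw [emulE_unitary_inner hSU]
        exact hHB.eigenvectorBasis.orthonormal.2 hij
      · rw [hN', emulE_mul, emulE_mul, e1, herm_emulE hHB i, emulE_smul]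
      · rw [hN', emulE_mul, emulE_mul, e1, herm_emulE hHB j, emulE_smul]
      · intro x
        exact (emulE_norm_le _ x).trans
          (mul_le_mul_of_nonneg_right hcon (norm_nonneg x))
    rw [div_le_iff₀ hSpos]
    have hfin : ε₀ < S * r := lt_of_lt_of_le (hstrict.trans_eq hnormconj) hnorm1
    nlinarith
  have hne : Set.Nonempty {r : ℝ | ∃ L R T : Matrix (Fin n) (Fin n) ℂ,
      L ∈ Matrix.unitaryGroup (Fin n) ℂ ∧ R ∈ Matrix.unitaryGroup (Fin n) ℂ ∧
      T ∈ Matrix.unitaryGroup (Fin n) ℂ ∧ r = tensorFrob (tensorAct L R T A - B)} :=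
    ⟨tensorFrob (tensorAct 1 1 1 A - B), 1, 1, 1, one_mem _, one_mem _, one_mem _, rfl⟩
  have hlow : ε₀ / S ≤ unitaryOrbitDist A B := le_csInf hne key
  have hfinal : ε / S < ε₀ / S := by
    gcongr
  exact lt_of_lt_of_le hfinal hlow
end

section
/- Let X be a random vector in ℝⁿ with independent coordinates, and suppose there exist ε > 0 and p ∈ (0,1) such that the Lévy concentration function satisfies 𝓛(X_i, ε) ≤ p for every coordinate i. Then there exist ε' > 0 and p' ∈ (0,1), depending only on ε and p, such that 𝓛(X, ε'√n) ≤ (p')ⁿ, where 𝓛(X, t) = sup_{a∈ℝⁿ} P(‖X − a‖ ≤ t). -/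
open MeasureTheory ProbabilityTheory

/-- Tensorization of the Lévy concentration function: if each coordinate of a random
vector with independent coordinates satisfies `𝓛(X_i, ε) ≤ p < 1`, then there are
`ε' > 0` and `p' < 1`, depending only on `ε` and `p`, with `𝓛(X, ε'√n) ≤ (p')ⁿ`. -/
theorem levy_tensorization (ε p : ℝ) (hε : 0 < ε) (hp : p ∈ Set.Ioo (0 : ℝ) 1) :
    ∃ ε' p' : ℝ, 0 < ε' ∧ p' ∈ Set.Ioo (0 : ℝ) 1 ∧
      ∀ (n : ℕ) (Ω : Type) (_ : MeasurableSpace Ω) (μ : Measure Ω),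
        IsProbabilityMeasure μ →
        ∀ X : Ω → Fin n → ℝ,
          (∀ i, Measurable fun ω => X ω i) →
          iIndepFun (m := fun _ : Fin n => (inferInstance : MeasurableSpace ℝ))
            (fun i ω => X ω i) μ →
          (∀ i, ∀ a : ℝ, μ {ω | |X ω i - a| ≤ ε} ≤ ENNReal.ofReal p) →
          ∀ a : Fin n → ℝ,
            μ {ω | Real.sqrt (∑ i, (X ω i - a i) ^ 2) ≤ ε' * Real.sqrt n} ≤
              ENNReal.ofReal (p' ^ n) := by
  obtain ⟨hp0, hp1⟩ := hp
  have h1p : 0 < 1 - p := by linarith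
  set q : ℝ := (1 + p) / 2 with hq_def
  have hq0 : 0 < q := by positivity
  have hq1 : q < 1 := by rw [hq_def]; linarith
  set L : ℝ := Real.log (2 / (1 - p)) / ε ^ 2 with hL_def
  have hL : 0 < L := by
    apply div_pos
    · apply Real.log_pos
      rw [lt_div_iff₀ h1p]; linarith
    · positivity
  have hLε : Real.exp (-(L * ε ^ 2)) = (1 - p) / 2 := by
    have hε2 : (ε : ℝ) ^ 2 ≠ 0 := by positivity
    rw [hL_def, div_mul_cancel₀ _ hε2, Real.exp_neg,
      Real.exp_log (by positivity), inv_div]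
  have hlogq : 0 < Real.log q⁻¹ := by
    rw [Real.log_inv]; linarith [Real.log_neg hq0 hq1]
  set ε' : ℝ := Real.sqrt (Real.log q⁻¹ / (2 * L)) with hε'_def
  have hε' : 0 < ε' := Real.sqrt_pos.mpr (by positivity)
  have hε'sq : ε' ^ 2 = Real.log q⁻¹ / (2 * L) := Real.sq_sqrt (by positivity)
  set p' : ℝ := Real.sqrt q with hp'_def
  have hp'0 : 0 < p' := Real.sqrt_pos.mpr hq0
  have hp'sq : p' ^ 2 = q := Real.sq_sqrt hq0.le
  have hp'1 : p' < 1 := by nlinarith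
  have hkey : Real.exp (L * ε' ^ 2) * q = p' := by
    rw [hε'sq]
    have h2L : (2 : ℝ) * L ≠ 0 := by positivity
    have h1 : L * (Real.log q⁻¹ / (2 * L)) = -(Real.log q / 2) := by
      rw [Real.log_inv]; field_simp
    have hs : Real.exp (Real.log q / 2) = p' := by
      rw [← Real.log_sqrt hq0.le, Real.exp_log hp'0]
    rw [h1, Real.exp_neg, hs]
    field_simp
    nlinarith
  refine ⟨ε', p', hε', ⟨hp'0, hp'1⟩, ?_⟩
  intro n Ω mΩ μ hμ X hX hIndep hcon a
  set Y : Fin n → Ω → ℝ := fun i ω => (X ω i - a i) ^ 2 with hY_def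
  have hYmeas : ∀ i, Measurable (Y i) := fun i =>
    ((hX i).sub measurable_const).pow_const 2
  have hYnonneg : ∀ i ω, 0 ≤ Y i ω := fun i ω => sq_nonneg _
  have hYindep : iIndepFun (m := fun _ : Fin n => (inferInstance : MeasurableSpace ℝ)) Y μ :=
    hIndep.comp (fun i x => (x - a i) ^ 2)
      (fun i => (measurable_id.sub measurable_const).pow_const 2)
  -- rewrite the event
  have hset : {ω | Real.sqrt (∑ i, (X ω i - a i) ^ 2) ≤ ε' * Real.sqrt n} =
      {ω | (∑ i, Y i ω) ≤ ε' ^ 2 * n} := by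
    ext ω
    simp only [Set.mem_setOf_eq, hY_def]
    rw [show ε' * Real.sqrt n = Real.sqrt (ε' ^ 2 * n) by
          rw [Real.sqrt_mul (by positivity), Real.sqrt_sq hε'.le],
      Real.sqrt_le_sqrt_iff (by positivity)]
  -- integrability
  have hexp_le_one : ∀ (x : ℝ), 0 ≤ x → Real.exp (-L * x) ≤ 1 := by
    intro x hx
    rw [Real.exp_le_one_iff]
    nlinarith
  have hYint : ∀ i, Integrable (fun ω => Real.exp (-L * Y i ω)) μ := by
    intro i
    refine (integrable_const (1 : ℝ)).mono'
      (((hYmeas i).const_mul (-L)).exp.aestronglyMeasurable) (ae_of_all _ fun ω => ?_)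
    rw [Real.norm_eq_abs, abs_of_pos (Real.exp_pos _)]
    exact hexp_le_one _ (hYnonneg i ω)
  have hSint : Integrable (fun ω => Real.exp (-L * (∑ i, Y i ω))) μ := by
    refine (integrable_const (1 : ℝ)).mono'
      ((((Finset.measurable_sum Finset.univ fun i _ => hYmeas i)).const_mul
        (-L)).exp.aestronglyMeasurable) (ae_of_all _ fun ω => ?_)
    rw [Real.norm_eq_abs, abs_of_pos (Real.exp_pos _)]
    exact hexp_le_one _ (Finset.sum_nonneg fun i _ => hYnonneg i ω)
  -- per-coordinate mgf bound
  have hmgf_i : ∀ i, mgf (Y i) μ (-L) ≤ q := by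
    intro i
    set A : Set Ω := {ω | |X ω i - a i| ≤ ε} with hA_def
    have hA : MeasurableSet A :=
      measurableSet_le ((hX i).sub measurable_const).abs measurable_const
    have hbound : ∀ ω, Real.exp (-L * Y i ω) ≤
        A.indicator (fun _ => (1 : ℝ)) ω + (1 - p) / 2 := by
      intro ω
      by_cases hω : ω ∈ A
      · rw [Set.indicator_of_mem hω]
        have h1 := hexp_le_one _ (hYnonneg i ω)
        linarith
      · rw [Set.indicator_of_notMem hω]
        have hgt : ε ≤ |X ω i - a i| := le_of_lt (not_le.mp hω)
        have h2 : ε ^ 2 ≤ Y i ω := by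
          have := pow_le_pow_left₀ hε.le hgt 2
          rwa [sq_abs] at this
        have h3 : Real.exp (-L * Y i ω) ≤ Real.exp (-(L * ε ^ 2)) := by
          apply Real.exp_le_exp.mpr
          nlinarith
        rw [hLε] at h3
        linarith
    have hμA : (μ A).toReal ≤ p :=
      ENNReal.toReal_le_of_le_ofReal hp0.le (hcon i (a i))
    calc mgf (Y i) μ (-L) = ∫ ω, Real.exp (-L * Y i ω) ∂μ := rfl
      _ ≤ ∫ ω, (A.indicator (fun _ => (1 : ℝ)) ω + (1 - p) / 2) ∂μ := by
          refine integral_mono (hYint i) ?_ hbound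
          exact ((integrable_const (1 : ℝ)).indicator hA).add (integrable_const _)
      _ = (μ A).toReal + (1 - p) / 2 := by
          rw [integral_add ((integrable_const (1 : ℝ)).indicator hA) (integrable_const _),
            integral_indicator_const _ hA, integral_const]
          simp [measure_univ, Measure.real]
      _ ≤ p + (1 - p) / 2 := by linarith
      _ = q := by rw [hq_def]; ring
  -- Chernoff bound
  have hch := measure_le_le_exp_mul_mgf (μ := μ) (X := fun ω => ∑ i, Y i ω)
    (ε' ^ 2 * n) (t := -L) (by linarith) hSint
  have hfun : (fun ω => ∑ i, Y i ω) = ∑ i, Y i := by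
    ext ω; simp [Finset.sum_apply]
  have hmgf_le : mgf (fun ω => ∑ i, Y i ω) μ (-L) ≤ q ^ n := by
    rw [hfun, hYindep.mgf_sum hYmeas]
    calc ∏ i, mgf (Y i) μ (-L) ≤ ∏ _i : Fin n, q :=
          Finset.prod_le_prod (fun i _ => mgf_nonneg) (fun i _ => hmgf_i i)
      _ = q ^ n := by simp
  have hfinal : (μ {ω | (∑ i, Y i ω) ≤ ε' ^ 2 * n}).toReal ≤ p' ^ n := by
    calc (μ {ω | (∑ i, Y i ω) ≤ ε' ^ 2 * n}).toReal
        ≤ Real.exp (-(-L) * (ε' ^ 2 * n)) * mgf (fun ω => ∑ i, Y i ω) μ (-L) := hch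
      _ ≤ Real.exp (-(-L) * (ε' ^ 2 * n)) * q ^ n := by
          exact mul_le_mul_of_nonneg_left hmgf_le (Real.exp_pos _).le
      _ = (Real.exp (L * ε' ^ 2) * q) ^ n := by
          rw [show (-(-L) * (ε' ^ 2 * n)) = (n : ℝ) * (L * ε' ^ 2) by ring,
            Real.exp_nat_mul, mul_pow]
      _ = p' ^ n := by rw [hkey]
  rw [hset]
  have hne : μ {ω | (∑ i, Y i ω) ≤ ε' ^ 2 * n} ≠ ⊤ := measure_ne_top μ _
  rw [← ENNReal.ofReal_toReal hne]
  exact ENNReal.ofReal_le_ofReal hfinal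
end

section
/- Let M be an n×p real matrix (n ≥ p), decomposed as M = (X | Y) with X of size n×q and Y of size n×(p−q). For any unit vector u₀ ∈ ℝᵖ supported on the first q coordinates, writing u₀' for its first q coordinates, and for any σ ∈ ℝ: ‖MᵀMu₀ − σ²u₀‖ ≥ ‖YᵀXu₀'‖ ≥ s_min(X)·s_min(YᵀU), where U is any n×q matrix whose columns form an orthonormal basis of the column span of X (assuming X has full column rank). -/
open Matrix

/-- Euclidean norm of a finitely-indexed real vector. -/
noncomputable def enorm' {ι : Type*} [Fintype ι] (v : ι → ℝ) : ℝ :=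
  Real.sqrt (∑ i, v i ^ 2)

/-- Smallest singular value of a matrix, as the infimum of `‖A v‖` over unit vectors `v`. -/
noncomputable def smin {ι κ : Type*} [Fintype ι] [Fintype κ] (A : Matrix ι κ ℝ) : ℝ :=
  sInf {r : ℝ | ∃ v : κ → ℝ, ∑ t, v t ^ 2 = 1 ∧ r = enorm' (A.mulVec v)}

lemma enorm'_nonneg {ι : Type*} [Fintype ι] (v : ι → ℝ) : 0 ≤ enorm' v :=
  Real.sqrt_nonneg _

lemma enorm'_smul {ι : Type*} [Fintype ι] (c : ℝ) (v : ι → ℝ) :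
    enorm' (c • v) = |c| * enorm' v := by
  unfold enorm'
  have : ∑ i, (c • v) i ^ 2 = c ^ 2 * ∑ i, v i ^ 2 := by
    rw [Finset.mul_sum]; congr 1; ext i; simp [mul_pow]
  rw [this, Real.sqrt_mul (sq_nonneg c), Real.sqrt_sq_eq_abs]

lemma smin_nonneg {ι κ : Type*} [Fintype ι] [Fintype κ] (A : Matrix ι κ ℝ) :
    0 ≤ smin A := by
  apply Real.sInf_nonneg
  rintro x ⟨v, -, rfl⟩
  exact enorm'_nonneg _

lemma smin_le {ι κ : Type*} [Fintype ι] [Fintype κ] (A : Matrix ι κ ℝ)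
    {v : κ → ℝ} (hv : ∑ t, v t ^ 2 = 1) : smin A ≤ enorm' (A.mulVec v) := by
  apply csInf_le
  · exact ⟨0, by rintro x ⟨w, -, rfl⟩; exact enorm'_nonneg _⟩
  · exact ⟨v, hv, rfl⟩

/-- Column-decomposition lower bound: writing `M = (X | Y)` and taking a unit vector `u₀`
supported on the `X`-columns with upper part `u₀'`, for any `σ`,
`‖MᵀMu₀ - σ²u₀‖ ≥ ‖Yᵀ X u₀'‖ ≥ s_min(X) · s_min(Yᵀ U)`, where the columns of `U` form an
orthonormal basis of the column span of the (full-column-rank) matrix `X`. -/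
theorem column_split_lower_bound (n q r : ℕ)
    (M : Matrix (Fin n) (Fin q ⊕ Fin r) ℝ)
    (X : Matrix (Fin n) (Fin q) ℝ) (Y : Matrix (Fin n) (Fin r) ℝ)
    (hX : X = M.submatrix id Sum.inl) (hY : Y = M.submatrix id Sum.inr)
    (u₀ : Fin q ⊕ Fin r → ℝ)
    (hu₀unit : ∑ t, u₀ t ^ 2 = 1)
    (hu₀supp : ∀ t, u₀ (Sum.inr t) = 0)
    (u₀' : Fin q → ℝ) (hu₀' : u₀' = fun t => u₀ (Sum.inl t))
    (σ : ℝ)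
    (U : Matrix (Fin n) (Fin q) ℝ)
    (hUorth : Uᵀ * U = 1)
    (hUspan : Set.range U.mulVec = Set.range X.mulVec)
    (hXrank : Function.Injective X.mulVec) :
    enorm' ((Mᵀ * M).mulVec u₀ - σ ^ 2 • u₀) ≥ enorm' (Yᵀ.mulVec (X.mulVec u₀')) ∧
      enorm' (Yᵀ.mulVec (X.mulVec u₀')) ≥ smin X * smin (Yᵀ * U) := by
  -- M u₀ = X u₀'
  have hMu : M.mulVec u₀ = X.mulVec u₀' := by
    funext i
    simp only [mulVec, dotProduct, hX, hu₀', submatrix_apply, id]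
    rw [Fintype.sum_sum_type]
    simp [hu₀supp]
  -- equality of the `inr` coordinates
  have hcoord : ∀ j, ((Mᵀ * M).mulVec u₀ - σ ^ 2 • u₀) (Sum.inr j)
      = Yᵀ.mulVec (X.mulVec u₀') j := by
    intro j
    have : ((Mᵀ * M).mulVec u₀) (Sum.inr j) = Yᵀ.mulVec (X.mulVec u₀') j := by
      rw [← mulVec_mulVec, hMu]
      simp [mulVec, dotProduct, hY, transpose_apply, submatrix_apply]
    simp [this, hu₀supp]
  constructor
  · -- first inequality
    unfold enorm'
    apply Real.sqrt_le_sqrt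
    rw [Fintype.sum_sum_type]
    have h1 : ∑ j, ((Mᵀ * M).mulVec u₀ - σ ^ 2 • u₀) (Sum.inr j) ^ 2
        = ∑ j, Yᵀ.mulVec (X.mulVec u₀') j ^ 2 := by
      apply Finset.sum_congr rfl; intro j _; rw [hcoord]
    rw [← h1]
    have h2 : 0 ≤ ∑ j, ((Mᵀ * M).mulVec u₀ - σ ^ 2 • u₀) (Sum.inl j) ^ 2 :=
      Finset.sum_nonneg fun j _ => sq_nonneg _
    linarith
  · -- second inequality
    have hu' : ∑ t, u₀' t ^ 2 = 1 := by
      rw [← hu₀unit, Fintype.sum_sum_type]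
      simp [hu₀', hu₀supp]
    -- find w with U w = X u₀'
    have hmem : X.mulVec u₀' ∈ Set.range U.mulVec := by
      rw [hUspan]; exact ⟨u₀', rfl⟩
    obtain ⟨w, hw⟩ := hmem
    -- norm preservation
    have hUw : Uᵀ.mulVec (U.mulVec w) = w := by
      rw [mulVec_mulVec, hUorth, one_mulVec]
    have hnorm : ∑ i, (U.mulVec w) i ^ 2 = ∑ t, w t ^ 2 := by
      have e1 : ∑ i, (U.mulVec w) i ^ 2 = U.mulVec w ⬝ᵥ U.mulVec w := by
        simp [dotProduct, sq]
      have e2 : U.mulVec w ⬝ᵥ U.mulVec w = Uᵀ.mulVec (U.mulVec w) ⬝ᵥ w := by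
        rw [dotProduct_mulVec]
        congr 1
        rw [← mulVec_transpose]
      rw [e1, e2, hUw]
      simp [dotProduct, sq]
    -- w ≠ 0
    have hXu0 : X.mulVec u₀' ≠ 0 := by
      intro h
      have : u₀' = 0 := hXrank (by rw [h, mulVec_zero])
      rw [this] at hu'
      simp at hu'
    have hwsum : 0 < ∑ t, w t ^ 2 := by
      rcases (Finset.sum_nonneg fun t _ => sq_nonneg (w t)).lt_or_eq with h | h
      · exact h
      · exfalso
        have hw0 : w = 0 := by
          funext t
          have := (Finset.sum_eq_zero_iff_of_nonneg
            (fun t _ => sq_nonneg (w t))).1 h.symm t (Finset.mem_univ t)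
          exact pow_eq_zero_iff (n := 2) (by norm_num) |>.1 this
        rw [hw0, mulVec_zero] at hw
        exact hXu0 hw.symm
    set a : ℝ := Real.sqrt (∑ t, w t ^ 2) with ha
    have ha_pos : 0 < a := Real.sqrt_pos.2 hwsum
    have ha_sq : a ^ 2 = ∑ t, w t ^ 2 := Real.sq_sqrt hwsum.le
    -- unit rescaling of w
    have hunit : ∑ t, (a⁻¹ • w) t ^ 2 = 1 := by
      have : ∑ t, (a⁻¹ • w) t ^ 2 = a⁻¹ ^ 2 * ∑ t, w t ^ 2 := by
        rw [Finset.mul_sum]; congr 1; ext t; simp [mul_pow]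
      rw [this, ← ha_sq]
      field_simp
    -- smin (Yᵀ U) ≤ a⁻¹ * ‖Yᵀ X u₀'‖
    have hYU : (Yᵀ * U).mulVec w = Yᵀ.mulVec (X.mulVec u₀') := by
      rw [← mulVec_mulVec, hw]
    have h3 : smin (Yᵀ * U) ≤ a⁻¹ * enorm' (Yᵀ.mulVec (X.mulVec u₀')) := by
      have := smin_le (Yᵀ * U) hunit
      rwa [mulVec_smul, enorm'_smul, abs_of_pos (inv_pos.2 ha_pos), hYU] at this
    -- smin X ≤ a
    have h4 : smin X ≤ a := by
      have := smin_le X hu'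
      have he : enorm' (X.mulVec u₀') = a := by
        rw [← hw]; unfold enorm'; rw [hnorm]
      rwa [he] at this
    -- combine
    have h5 : smin X * smin (Yᵀ * U) ≤ a * smin (Yᵀ * U) :=
      mul_le_mul_of_nonneg_right h4 (smin_nonneg _)
    have h6 : a * smin (Yᵀ * U) ≤ enorm' (Yᵀ.mulVec (X.mulVec u₀')) := by
      have := mul_le_mul_of_nonneg_left h3 ha_pos.le
      rwa [← mul_assoc, mul_inv_cancel₀ ha_pos.ne', one_mul] at this
    exact le_trans h5 h6
end

section
/- Let M be an n×p real matrix written as M = (X over Y) stacked vertically, with X of size q×p, and let v₀ ∈ ℝⁿ be a unit vector supported on the first q coordinates with upper part v₀'. Decompose v₀' = v_∥ + v_⊥ where v_⊥ is the orthogonal projection of v₀' onto ker(Xᵀ). Then for any σ: ‖MMᵀv₀ − σ²v₀‖² ≥ ‖v_∥‖²·s_min(X)²·s_min(Y)² + σ⁴‖v_⊥‖². -/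
open Matrix

lemma enorm'_sq {ι : Type*} [Fintype ι] (v : ι → ℝ) : enorm' v ^ 2 = ∑ i, v i ^ 2 :=
  Real.sq_sqrt (Finset.sum_nonneg fun i _ => sq_nonneg _)

lemma smin_sq_le {ι κ : Type*} [Fintype ι] [Fintype κ] (A : Matrix ι κ ℝ) (v : κ → ℝ) :
    smin A ^ 2 * (∑ t, v t ^ 2) ≤ ∑ i, (A.mulVec v i) ^ 2 := by
  by_cases hv : ∑ t, v t ^ 2 = 0
  · rw [hv, mul_zero]
    exact Finset.sum_nonneg fun i _ => sq_nonneg _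
  · have hnn : 0 ≤ ∑ t, v t ^ 2 := Finset.sum_nonneg fun i _ => sq_nonneg _
    set c := Real.sqrt (∑ t, v t ^ 2) with hc
    have hcpos : 0 < c := Real.sqrt_pos.2 (lt_of_le_of_ne hnn (Ne.symm hv))
    have hc2 : c ^ 2 = ∑ t, v t ^ 2 := Real.sq_sqrt hnn
    have hunit : ∑ t, (c⁻¹ • v) t ^ 2 = 1 := by
      simp only [Pi.smul_apply, smul_eq_mul, mul_pow, ← Finset.mul_sum]
      rw [← hc2]
      field_simp
    have hmem : enorm' (A.mulVec (c⁻¹ • v)) ∈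
        {r : ℝ | ∃ u : κ → ℝ, ∑ t, u t ^ 2 = 1 ∧ r = enorm' (A.mulVec u)} :=
      ⟨c⁻¹ • v, hunit, rfl⟩
    have hbdd : BddBelow {r : ℝ | ∃ u : κ → ℝ, ∑ t, u t ^ 2 = 1 ∧ r = enorm' (A.mulVec u)} :=
      ⟨0, by rintro x ⟨u, hu, rfl⟩; exact Real.sqrt_nonneg _⟩
    have hle : smin A ≤ enorm' (A.mulVec (c⁻¹ • v)) := csInf_le hbdd hmem
    have hsmul : A.mulVec (c⁻¹ • v) = c⁻¹ • A.mulVec v := by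
      rw [Matrix.mulVec_smul]
    have henorm : enorm' (c⁻¹ • A.mulVec v) = c⁻¹ * enorm' (A.mulVec v) := by
      unfold enorm'
      simp only [Pi.smul_apply, smul_eq_mul, mul_pow, ← Finset.mul_sum]
      rw [Real.sqrt_mul (by positivity) _, Real.sqrt_sq (by positivity)]
    rw [hsmul, henorm] at hle
    have hle2 : smin A * c ≤ enorm' (A.mulVec v) := by
      rw [← le_div_iff₀ hcpos] at *
      calc smin A ≤ c⁻¹ * enorm' (A.mulVec v) := hle
        _ = enorm' (A.mulVec v) / c := by ring
    have := mul_le_mul hle2 hle2 (mul_nonneg (smin_nonneg A) hcpos.le) (Real.sqrt_nonneg _)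
    calc smin A ^ 2 * (∑ t, v t ^ 2) = (smin A * c) * (smin A * c) := by
          rw [← hc2]; ring
      _ ≤ enorm' (A.mulVec v) * enorm' (A.mulVec v) := this
      _ = ∑ i, (A.mulVec v i) ^ 2 := by rw [← sq, enorm'_sq]

/-- Row-decomposition lower bound: writing `M = (X over Y)` (rows stacked) and taking a
unit vector `v₀` supported on the `X`-rows with upper part `v₀' = v_∥ + v_⊥`, where `v_⊥`
is the orthogonal projection of `v₀'` onto `ker(Xᵀ)`, for any `σ`,
`‖MMᵀv₀ - σ²v₀‖² ≥ ‖v_∥‖² s_min(X)² s_min(Y)² + σ⁴ ‖v_⊥‖²`. -/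
theorem row_split_lower_bound (q r p : ℕ)
    (M : Matrix (Fin q ⊕ Fin r) (Fin p) ℝ)
    (X : Matrix (Fin q) (Fin p) ℝ) (Y : Matrix (Fin r) (Fin p) ℝ)
    (hX : X = M.submatrix Sum.inl id) (hY : Y = M.submatrix Sum.inr id)
    (v₀ : Fin q ⊕ Fin r → ℝ)
    (hv₀unit : ∑ t, v₀ t ^ 2 = 1)
    (hv₀supp : ∀ t, v₀ (Sum.inr t) = 0)
    (v₀' vpar vperp : Fin q → ℝ)
    (hv₀' : v₀' = fun t => v₀ (Sum.inl t))
    (hsplit : v₀' = vpar + vperp)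
    (hperp : Xᵀ.mulVec vperp = 0)
    (hpar : ∀ w : Fin q → ℝ, Xᵀ.mulVec w = 0 → ∑ t, vpar t * w t = 0)
    (σ : ℝ) :
    enorm' ((M * Mᵀ).mulVec v₀ - σ ^ 2 • v₀) ^ 2 ≥
      (∑ t, vpar t ^ 2) * smin Xᵀ ^ 2 * smin Y ^ 2 + σ ^ 4 * (∑ t, vperp t ^ 2) := by
  set w : Fin p → ℝ := Xᵀ.mulVec vpar with hw
  -- Mᵀ.mulVec v₀ = Xᵀ.mulVec v₀' = w
  have h1 : Mᵀ.mulVec v₀ = w := by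
    have : Xᵀ.mulVec v₀' = w := by
      rw [hsplit, Matrix.mulVec_add, hperp, add_zero]
    rw [← this]
    funext j
    simp only [Matrix.mulVec, dotProduct, Matrix.transpose_apply,
      Fintype.sum_sum_type, hv₀supp, mul_zero, Finset.sum_const_zero, add_zero,
      hX, hv₀', Matrix.submatrix_apply, id]
  have h2 : (M * Mᵀ).mulVec v₀ = M.mulVec w := by
    rw [← Matrix.mulVec_mulVec, h1]
  have hXw : ∀ i, M.mulVec w (Sum.inl i) = X.mulVec w i := by
    intro i; simp [hX, Matrix.mulVec, dotProduct]
  have hYw : ∀ j, M.mulVec w (Sum.inr j) = Y.mulVec w j := by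
    intro j; simp [hY, Matrix.mulVec, dotProduct]
  -- expand the norm
  rw [enorm'_sq, Fintype.sum_sum_type]
  have hLHS1 : ∀ i, ((M * Mᵀ).mulVec v₀ - σ ^ 2 • v₀) (Sum.inl i)
      = X.mulVec w i - σ ^ 2 * v₀' i := by
    intro i
    simp [h2, hXw, hv₀']
  have hLHS2 : ∀ j, ((M * Mᵀ).mulVec v₀ - σ ^ 2 • v₀) (Sum.inr j)
      = Y.mulVec w j := by
    intro j
    simp [h2, hYw, hv₀supp]
  simp only [hLHS1, hLHS2]
  -- orthogonality facts
  have hA : ∑ i, X.mulVec w i * vperp i = 0 := by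
    have heq : ∑ i, X.mulVec w i * vperp i = ∑ j, w j * Xᵀ.mulVec vperp j := by
      simp only [Matrix.mulVec, dotProduct, Matrix.transpose_apply,
        Finset.sum_mul, Finset.mul_sum]
      rw [Finset.sum_comm]
      exact Finset.sum_congr rfl fun j _ => Finset.sum_congr rfl fun i _ => by ring
    rw [heq, hperp]
    simp
  have hB : ∑ i, vpar i * vperp i = 0 := hpar vperp hperp
  -- top block
  have htop : ∑ i, (X.mulVec w i - σ ^ 2 * v₀' i) ^ 2
      = ∑ i, ((X.mulVec w i - σ ^ 2 * vpar i) ^ 2 + σ ^ 4 * vperp i ^ 2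
          - 2 * σ ^ 2 * (X.mulVec w i * vperp i) + 2 * σ ^ 4 * (vpar i * vperp i)) := by
    apply Finset.sum_congr rfl
    intro i _
    rw [hsplit]
    simp only [Pi.add_apply]
    ring
  have htop2 : ∑ i, (X.mulVec w i - σ ^ 2 * v₀' i) ^ 2
      = ∑ i, (X.mulVec w i - σ ^ 2 * vpar i) ^ 2 + σ ^ 4 * ∑ i, vperp i ^ 2
        - 2 * σ ^ 2 * (∑ i, X.mulVec w i * vperp i)
        + 2 * σ ^ 4 * (∑ i, vpar i * vperp i) := by
    rw [htop]
    simp only [Finset.sum_add_distrib, Finset.sum_sub_distrib, ← Finset.mul_sum]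
  have htopge : ∑ i, (X.mulVec w i - σ ^ 2 * v₀' i) ^ 2 ≥ σ ^ 4 * ∑ i, vperp i ^ 2 := by
    rw [htop2, hA, hB]
    have : (0:ℝ) ≤ ∑ i, (X.mulVec w i - σ ^ 2 * vpar i) ^ 2 :=
      Finset.sum_nonneg fun i _ => sq_nonneg _
    linarith
  -- bottom block
  have hb1 : smin Y ^ 2 * (∑ j, w j ^ 2) ≤ ∑ j, (Y.mulVec w j) ^ 2 := smin_sq_le Y w
  have hb2 : smin Xᵀ ^ 2 * (∑ t, vpar t ^ 2) ≤ ∑ j, w j ^ 2 := smin_sq_le Xᵀ vpar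
  have hY2 : (0:ℝ) ≤ smin Y ^ 2 := sq_nonneg _
  have hbot : (∑ t, vpar t ^ 2) * smin Xᵀ ^ 2 * smin Y ^ 2 ≤ ∑ j, (Y.mulVec w j) ^ 2 := by
    calc (∑ t, vpar t ^ 2) * smin Xᵀ ^ 2 * smin Y ^ 2
        = smin Y ^ 2 * (smin Xᵀ ^ 2 * (∑ t, vpar t ^ 2)) := by ring
      _ ≤ smin Y ^ 2 * (∑ j, w j ^ 2) := mul_le_mul_of_nonneg_left hb2 hY2
      _ ≤ ∑ j, (Y.mulVec w j) ^ 2 := hb1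
  linarith
end

section
/- Let M be an n×p matrix (p ≥ 2) and let M' be the n×(p−1) matrix obtained by deleting the last column X of M. Let u = (u', b) be a unit right singular vector of M for singular value σ_i(M), split into its first p−1 coordinates u' and last coordinate b. Let û be a unit right singular vector and ŵ the corresponding unit left singular vector of M' for σ_i(M'), with σ_i(M') ≠ 0. Then |ŵᵀX| ≤ |σ_i(M')² − σ_i(M)²| / (|b|·σ_i(M')), provided b ≠ 0. -/
open Matrix

/-- Singular-vector perturbation inequality for deleting the last column: if `u = (u', b)`
is a unit right singular vector of `M` for the singular value `σ`, and `(uhat, what)` is a unit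
right/left singular pair of `M'` (the matrix `M` without its last column `X`) for the
singular value `σ' > 0`, and `b ≠ 0`, then `|whatᵀX| ≤ |σ'² - σ²| / (|b| σ')`. -/
theorem deleted_column_singular_bound (n p : ℕ)
    (M : Matrix (Fin n) (Fin (p + 1)) ℝ)
    (M' : Matrix (Fin n) (Fin p) ℝ) (hM' : M' = M.submatrix id Fin.castSucc)
    (σ σ' : ℝ) (hσ' : 0 < σ')
    (u : Fin (p + 1) → ℝ)
    (hu_unit : ∑ t, u t ^ 2 = 1)
    (hu : (Mᵀ * M).mulVec u = σ ^ 2 • u)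
    (hb : u (Fin.last p) ≠ 0)
    (uhat : Fin p → ℝ) (what : Fin n → ℝ)     (huhat_unit : ∑ t, uhat t ^ 2 = 1)
    (huhat : (M'ᵀ * M').mulVec uhat = σ' ^ 2 • uhat)
    (hpair : M'.mulVec uhat = σ' • what) :
    |∑ i, what i * M i (Fin.last p)| ≤ |σ' ^ 2 - σ ^ 2| / (|u (Fin.last p)| * σ') := by
  subst hM'
  set b := u (Fin.last p) with hbdef
  set S := ∑ j : Fin p, uhat j * u (Fin.castSucc j) with hSdef
  set W := ∑ i, what i * M i (Fin.last p) with hWdef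
  -- Row `castSucc j` of the eigen-equation for M
  have h1 : ∀ j : Fin p,
      (∑ k : Fin p, (∑ i, M i j.castSucc * M i k.castSucc) * u k.castSucc)
        + (∑ i, M i j.castSucc * M i (Fin.last p)) * b = σ ^ 2 * u j.castSucc := by
    intro j
    have := congrFun hu j.castSucc
    simpa [mulVec, dotProduct, mul_apply, transpose_apply, Fin.sum_univ_castSucc,
      Finset.sum_mul, mul_comm, mul_left_comm] using this
  -- Eigen-equation for M'
  have h2 : ∀ j : Fin p,
      ∑ k : Fin p, (∑ i, M i j.castSucc * M i k.castSucc) * uhat k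
        = σ' ^ 2 * uhat j := by
    intro j
    have := congrFun huhat j
    simpa [mulVec, dotProduct, mul_apply, transpose_apply, submatrix_apply] using this
  -- pair relation
  have hp : ∀ i : Fin n, ∑ j : Fin p, M i j.castSucc * uhat j = σ' * what i := by
    intro i
    have := congrFun hpair i
    simpa [mulVec, dotProduct, submatrix_apply] using this
  -- Symmetric bilinear form identity
  have hsym : ∀ j k : Fin p, (∑ i, M i j.castSucc * M i k.castSucc)
      = ∑ i, M i k.castSucc * M i j.castSucc :=
    fun j k => Finset.sum_congr rfl fun i _ => mul_comm _ _
  have hA : ∑ j : Fin p, uhat j * ∑ k : Fin p, (∑ i, M i j.castSucc * M i k.castSucc) * u k.castSucc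
      = ∑ j : Fin p, u j.castSucc * ∑ k : Fin p, (∑ i, M i j.castSucc * M i k.castSucc) * uhat k := by
    simp_rw [Finset.mul_sum]
    rw [Finset.sum_comm]
    refine Finset.sum_congr rfl fun j _ => Finset.sum_congr rfl fun k _ => ?_
    rw [hsym j k]
    ring
  -- hC : the cross term
  have hC : ∑ j : Fin p, uhat j * (∑ i, M i j.castSucc * M i (Fin.last p)) = σ' * W := by
    simp_rw [Finset.mul_sum]
    rw [Finset.sum_comm]
    have : ∀ i : Fin n, ∑ j : Fin p, uhat j * (M i j.castSucc * M i (Fin.last p))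
        = σ' * what i * M i (Fin.last p) := by
      intro i
      rw [← hp i, Finset.sum_mul]
      exact Finset.sum_congr rfl fun j _ => by ring
    rw [Finset.sum_congr rfl fun i _ => this i]
    rw [hWdef, Finset.mul_sum]
    exact Finset.sum_congr rfl fun i _ => by ring
  -- Key identity
  have key : (σ' ^ 2 - σ ^ 2) * S = -(b * (σ' * W)) := by
    have e1 : σ ^ 2 * S = σ' ^ 2 * S + b * (σ' * W) := by
      calc σ ^ 2 * S = ∑ j : Fin p, uhat j * (σ ^ 2 * u j.castSucc) := by
            rw [hSdef, Finset.mul_sum]; exact Finset.sum_congr rfl fun j _ => by ring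
        _ = ∑ j : Fin p, uhat j * ((∑ k : Fin p, (∑ i, M i j.castSucc * M i k.castSucc) * u k.castSucc)
              + (∑ i, M i j.castSucc * M i (Fin.last p)) * b) := by
            exact Finset.sum_congr rfl fun j _ => by rw [h1 j]
        _ = (∑ j : Fin p, uhat j * ∑ k : Fin p, (∑ i, M i j.castSucc * M i k.castSucc) * u k.castSucc)
              + b * ∑ j : Fin p, uhat j * (∑ i, M i j.castSucc * M i (Fin.last p)) := by
            rw [Finset.mul_sum, ← Finset.sum_add_distrib]
            exact Finset.sum_congr rfl fun j _ => by ring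
        _ = (∑ j : Fin p, u j.castSucc * ∑ k : Fin p, (∑ i, M i j.castSucc * M i k.castSucc) * uhat k)
              + b * (σ' * W) := by rw [hA, hC]
        _ = (∑ j : Fin p, u j.castSucc * (σ' ^ 2 * uhat j)) + b * (σ' * W) := by
            rw [Finset.sum_congr rfl fun j _ => by rw [h2 j]]
        _ = σ' ^ 2 * S + b * (σ' * W) := by
            have : ∑ j : Fin p, u j.castSucc * (σ' ^ 2 * uhat j) = σ' ^ 2 * S := by
              rw [hSdef, Finset.mul_sum]
              exact Finset.sum_congr rfl fun j _ => by ring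
            rw [this]
    linarith
  -- |S| ≤ 1
  have hSle : |S| ≤ 1 := by
    have hcs : S ^ 2 ≤ (∑ j : Fin p, uhat j ^ 2) * (∑ j : Fin p, u (Fin.castSucc j) ^ 2) :=
      Finset.sum_mul_sq_le_sq_mul_sq Finset.univ uhat (fun j => u (Fin.castSucc j))
    have hsub : (∑ j : Fin p, u (Fin.castSucc j) ^ 2) ≤ 1 := by
      rw [← hu_unit, Fin.sum_univ_castSucc]
      nlinarith [sq_nonneg (u (Fin.last p))]
    have : S ^ 2 ≤ 1 := by
      rw [huhat_unit, one_mul] at hcs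
      linarith
    nlinarith [sq_abs S, abs_nonneg S]
  -- Finish
  have hbpos : 0 < |b| := abs_pos.mpr hb
  rw [le_div_iff₀ (by positivity)]
  have habs : |b| * (σ' * |W|) ≤ |σ' ^ 2 - σ ^ 2| := by
    have := congrArg abs key
    rw [abs_neg, abs_mul, abs_mul, abs_mul, abs_of_pos hσ'] at this
    calc |b| * (σ' * |W|) = |σ' ^ 2 - σ ^ 2| * |S| := this.symm
      _ ≤ |σ' ^ 2 - σ ^ 2| * 1 := by
          exact mul_le_mul_of_nonneg_left hSle (abs_nonneg _)
      _ = |σ' ^ 2 - σ ^ 2| := mul_one _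
  nlinarith [abs_nonneg W, abs_nonneg (σ' ^ 2 - σ ^ 2)]
end

section
/- Let u be a unit vector in ℝᵖ that is (c₀,c₁)-incompressible, i.e., its Euclidean distance to every vector supported on at most ⌊c₀p⌋ coordinates is greater than c₁. Then at least ⌈c₀c₁²p/2⌉ coordinates j of u satisfy c₁/√(2p) ≤ |u_j| ≤ 1/√(c₀p). -/
/-- Spread coordinates of incompressible vectors: if a unit vector `u ∈ ℝᵖ` has distance
`> c₁` to every `⌊c₀ p⌋`-sparse vector, then at least `⌈c₀ c₁² p / 2⌉` coordinates `j`
satisfy `c₁/√(2p) ≤ |u j| ≤ 1/√(c₀ p)`. -/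
theorem incompressible_spread (p : ℕ) (c₀ c₁ : ℝ)
    (hc₀ : c₀ ∈ Set.Ioo (0 : ℝ) 1) (hc₁ : c₁ ∈ Set.Ioo (0 : ℝ) 1)
    (u : Fin p → ℝ) (hu : ∑ t, u t ^ 2 = 1)
    (hincomp : ∀ x : Fin p → ℝ,
      (Finset.univ.filter fun t => x t ≠ 0).card ≤ ⌊c₀ * p⌋₊ →
      Real.sqrt (∑ t, (u t - x t) ^ 2) > c₁) :
    ⌈c₀ * c₁ ^ 2 * p / 2⌉₊ ≤
      (Finset.univ.filter fun j =>
        c₁ / Real.sqrt (2 * p) ≤ |u j| ∧ |u j| ≤ 1 / Real.sqrt (c₀ * p)).card := by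
  obtain ⟨hc₀0, hc₀1⟩ := hc₀
  obtain ⟨hc₁0, hc₁1⟩ := hc₁
  rcases Nat.eq_zero_or_pos p with hp | hp
  · subst hp; simp at hu
  have hP : (0:ℝ) < p := by exact_mod_cast hp
  have hc₀P : (0:ℝ) < c₀ * p := by positivity
  set a := 1 / Real.sqrt (c₀ * p) with ha
  set b := c₁ / Real.sqrt (2 * p) with hb
  have ha2 : a ^ 2 = 1 / (c₀ * p) := by
    rw [ha, div_pow, one_pow, Real.sq_sqrt hc₀P.le]
  have hb2 : b ^ 2 = c₁ ^ 2 / (2 * p) := by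
    rw [hb, div_pow, Real.sq_sqrt (by positivity : (0:ℝ) ≤ 2 * (p:ℝ))]
  have ha0 : 0 < a := by rw [ha]; positivity
  -- the big coordinates
  set σ := Finset.univ.filter (fun j => a < |u j|) with hσ
  have hσcard : σ.card ≤ ⌊c₀ * p⌋₊ := by
    rw [Nat.le_floor_iff hc₀P.le]
    have h1 : σ.card • a ^ 2 ≤ ∑ t ∈ σ, u t ^ 2 := by
      refine Finset.card_nsmul_le_sum σ _ _ ?_
      intro j hj
      rw [hσ, Finset.mem_filter] at hj
      calc a ^ 2 ≤ |u j| ^ 2 := by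
            exact pow_le_pow_left₀ ha0.le hj.2.le 2
        _ = u j ^ 2 := sq_abs _
    have h2 : ∑ t ∈ σ, u t ^ 2 ≤ 1 := by
      rw [← hu]
      exact Finset.sum_le_sum_of_subset_of_nonneg (Finset.subset_univ _)
        (fun i _ _ => sq_nonneg _)
    rw [nsmul_eq_mul, ha2] at h1
    have h3 : (σ.card : ℝ) * (1 / (c₀ * p)) ≤ 1 := h1.trans h2
    rw [mul_one_div, div_le_one hc₀P] at h3
    exact h3
  -- incompressibility: mass of small coordinates exceeds c₁²
  set S := Finset.univ.filter (fun j => |u j| ≤ a) with hS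
  have hSsum : c₁ ^ 2 < ∑ t ∈ S, u t ^ 2 := by
    set x : Fin p → ℝ := fun j => if a < |u j| then u j else 0 with hx
    have hsupp : (Finset.univ.filter fun t => x t ≠ 0).card ≤ ⌊c₀ * p⌋₊ := by
      refine le_trans (Finset.card_le_card ?_) hσcard
      intro t ht
      rw [Finset.mem_filter] at ht
      rw [hσ, Finset.mem_filter]
      refine ⟨Finset.mem_univ _, ?_⟩
      by_contra h
      exact ht.2 (by simp [hx, if_neg h])
    have hgt := hincomp x hsupp
    have hsum : ∑ t, (u t - x t) ^ 2 = ∑ t ∈ S, u t ^ 2 := by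
      rw [hS, Finset.sum_filter]
      refine Finset.sum_congr rfl fun t _ => ?_
      by_cases h : a < |u t|
      · simp [hx, if_pos h, not_lt.mpr h.le, if_neg (not_le.mpr h)]
      · simp [hx, if_neg h, if_pos (not_lt.mp h)]
    rw [hsum] at hgt
    have hnn : 0 ≤ ∑ t ∈ S, u t ^ 2 := Finset.sum_nonneg fun i _ => sq_nonneg _
    calc c₁ ^ 2 < Real.sqrt (∑ t ∈ S, u t ^ 2) ^ 2 := by
          exact pow_lt_pow_left₀ hgt hc₁0.le (by norm_num)
      _ = ∑ t ∈ S, u t ^ 2 := Real.sq_sqrt hnn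
  -- split into medium and tiny
  set M := Finset.univ.filter (fun j => b ≤ |u j| ∧ |u j| ≤ a) with hM
  set T := S.filter (fun j => ¬ b ≤ |u j|) with hT
  have hsplit : ∑ t ∈ S, u t ^ 2 = ∑ t ∈ M, u t ^ 2 + ∑ t ∈ T, u t ^ 2 := by
    have : M = S.filter (fun j => b ≤ |u j|) := by
      rw [hM, hS, Finset.filter_filter]
      apply Finset.filter_congr
      intro j _
      tauto
    rw [this, hT]
    exact (Finset.sum_filter_add_sum_filter_not S _ _).symm
  have hMsum : ∑ t ∈ M, u t ^ 2 ≤ (M.card : ℝ) * (1 / (c₀ * p)) := by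
    rw [← ha2]
    have := Finset.sum_le_card_nsmul M (fun t => u t ^ 2) (a ^ 2) ?_
    · rwa [nsmul_eq_mul] at this
    · intro j hj
      rw [hM, Finset.mem_filter] at hj
      calc u j ^ 2 = |u j| ^ 2 := (sq_abs _).symm
        _ ≤ a ^ 2 := pow_le_pow_left₀ (abs_nonneg _) hj.2.2 2
  have hTsum : ∑ t ∈ T, u t ^ 2 ≤ c₁ ^ 2 / 2 := by
    have h1 : ∑ t ∈ T, u t ^ 2 ≤ (T.card : ℝ) * (c₁ ^ 2 / (2 * p)) := by
      rw [← hb2]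
      have := Finset.sum_le_card_nsmul T (fun t => u t ^ 2) (b ^ 2) ?_
      · rwa [nsmul_eq_mul] at this
      · intro j hj
        rw [hT, Finset.mem_filter] at hj
        have hb' : |u j| ≤ b := (not_le.mp hj.2).le
        calc u j ^ 2 = |u j| ^ 2 := (sq_abs _).symm
          _ ≤ b ^ 2 := pow_le_pow_left₀ (abs_nonneg _) hb' 2
    have h2 : (T.card : ℝ) ≤ p := by
      exact_mod_cast Finset.card_le_card (Finset.subset_univ T) |>.trans
        (le_of_eq (Finset.card_univ.trans (Fintype.card_fin p)))
    calc ∑ t ∈ T, u t ^ 2 ≤ (T.card : ℝ) * (c₁ ^ 2 / (2 * p)) := h1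
      _ ≤ (p : ℝ) * (c₁ ^ 2 / (2 * p)) := by
          exact mul_le_mul_of_nonneg_right h2 (by positivity)
      _ = c₁ ^ 2 / 2 := by field_simp
  -- conclude
  have hkey : c₀ * c₁ ^ 2 * p / 2 < (M.card : ℝ) := by
    have h : c₁ ^ 2 < (M.card : ℝ) * (1 / (c₀ * p)) + c₁ ^ 2 / 2 := by
      calc c₁ ^ 2 < ∑ t ∈ S, u t ^ 2 := hSsum
        _ = ∑ t ∈ M, u t ^ 2 + ∑ t ∈ T, u t ^ 2 := hsplit
        _ ≤ (M.card : ℝ) * (1 / (c₀ * p)) + c₁ ^ 2 / 2 := add_le_add hMsum hTsum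
    have h' : c₁ ^ 2 / 2 < (M.card : ℝ) / (c₀ * p) := by
      rw [mul_one_div] at h; linarith
    rw [lt_div_iff₀ hc₀P] at h'
    nlinarith
  rw [hM] at hkey ⊢
  exact Nat.ceil_le.mpr hkey.le
end
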